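/- arXiv:2101.10026 — 11 statements merged into one kernel-verified Lean document; each statement's English description precedes it below -/
import Mathlib

section
/- Every finite tree satisfies the Two-Points Condition when the boundary is taken to be the set of all vertices of degree 1: for any subset S of interior vertices with |S| ≥ 2, there exist at least two extreme points of S with respect to the set of leaves. -/
open Finset

variable {V : Type*} [Fintype V] [DecidableEq V]

noncomputable def lap (G : SimpleGraph V) [DecidableRel G.Adj] (μ : V → ℝ) (g : V → V → ℝ)
    (u : V → ℝ) (x : V) : ℝ :=
  (μ x)⁻¹ * ∑ y ∈ univ.filter (fun y => G.Adj x y), g x y * (u y - u x)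

noncomputable def nder (G : SimpleGraph V) [DecidableRel G.Adj] (B : Finset V) (μ : V → ℝ)
    (g : V → V → ℝ) (u : V → ℝ) (z : V) : ℝ :=
  (μ z)⁻¹ * ∑ x ∈ univ.filter (fun x => G.Adj x z ∧ x ∉ B), g x z * (u x - u z)

def IsWave (G : SimpleGraph V) [DecidableRel G.Adj] (B : Finset V) (μ : V → ℝ)
    (g : V → V → ℝ) (q : V → ℝ) (W : V → ℝ) (u : V → ℕ → ℝ) : Prop :=
  (∀ x, x ∉ B → ∀ t : ℕ, 1 ≤ t →
    (u x (t+1) - 2 * u x t + u x (t-1)) - lap G μ g (fun y => u y t) x + q x * u x t = 0) ∧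
  (∀ z ∈ B, ∀ t : ℕ, nder G B μ g (fun y => u y t) z = 0) ∧
  (∀ x, x ∉ B → u x 1 = u x 0) ∧
  (∀ x, u x 0 = W x)

def reduced (G : SimpleGraph V) (B : Finset V) : SimpleGraph V where
  Adj x y := G.Adj x y ∧ (x ∉ B ∨ y ∉ B)
  symm := ⟨fun _ _ h => ⟨h.1.symm, h.2.symm⟩⟩
  loopless := ⟨fun x h => G.loopless.irrefl x h.1⟩

def ExtremePt (G : SimpleGraph V) (B : Finset V) (S : Finset V) (x₀ : V) : Prop :=
  x₀ ∈ S ∧ ∃ z ∈ B, ∀ y ∈ S, y ≠ x₀ → G.edist z x₀ < G.edist z y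

def TwoPoints (G : SimpleGraph V) (B : Finset V) : Prop :=
  ∀ S : Finset V, (∀ v ∈ S, v ∉ B) → 2 ≤ S.card →
    ∃ x₀ x₁, x₀ ≠ x₁ ∧ ExtremePt G B S x₀ ∧ ExtremePt G B S x₁


section TreeHelpers
open SimpleGraph Walk
set_option linter.unusedSectionVars false
variable {G : SimpleGraph V}

lemma shortest_split {a b v : V} (hc : G.Connected) (w : G.Walk a b)
    (hw : w.length = G.dist a b) (hv : v ∈ w.support) :
    (w.takeUntil v hv).length = G.dist a v ∧ (w.dropUntil v hv).length = G.dist v b ∧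
      G.dist a v + G.dist v b = G.dist a b := by
  have hsum : (w.takeUntil v hv).length + (w.dropUntil v hv).length = w.length := by
    rw [← Walk.length_append, Walk.take_spec]
  have h1 := SimpleGraph.dist_le (w.takeUntil v hv)
  have h2 := SimpleGraph.dist_le (w.dropUntil v hv)
  have h3 := hc.dist_triangle (u := a) (v := v) (w := b)
  omega

lemma shortest_inj {a b v₁ v₂ : V} (hc : G.Connected) (w : G.Walk a b)
    (hw : w.length = G.dist a b) (h₁ : v₁ ∈ w.support) (h₂ : v₂ ∈ w.support)
    (hd : G.dist a v₁ = G.dist a v₂) : v₁ = v₂ := by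
  obtain ⟨ht, hr, hsum⟩ := shortest_split hc w hw h₁
  have h₂' : v₂ ∈ ((w.takeUntil v₁ h₁).append (w.dropUntil v₁ h₁)).support := by
    rw [Walk.take_spec]; exact h₂
  rcases (Walk.mem_support_append_iff _ _).mp h₂' with hcase | hcase
  · obtain ⟨_, _, hsum2⟩ := shortest_split hc _ ht hcase
    have : G.dist v₂ v₁ = 0 := by omega
    exact ((hc.dist_eq_zero_iff).mp this).symm
  · obtain ⟨_, _, hsum2⟩ := shortest_split hc _ hr hcase
    have h3 := hc.dist_triangle (u := a) (v := v₂) (w := b)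
    have : G.dist v₁ v₂ = 0 := by omega
    exact (hc.dist_eq_zero_iff).mp this

lemma path_concat {a u z : V} (q : G.Walk a u) (hq : q.IsPath) (h : G.Adj u z)
    (hz : z ∉ q.support) : (q.append (Walk.cons h Walk.nil)).IsPath := by
  rw [Walk.isPath_def, Walk.support_append]
  simp only [Walk.support_cons, Walk.support_nil, List.tail_cons]
  rw [List.nodup_append]
  exact ⟨hq.support_nodup, List.nodup_singleton z,
    by simp [List.disjoint_singleton]; intro a ha h; exact hz (h ▸ ha)⟩

lemma tree_path_unique (hT : G.IsTree) {a b : V} (p q : G.Walk a b)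
    (hp : p.IsPath) (hq : q.IsPath) : p = q := by
  obtain ⟨r, -, hr⟩ := hT.existsUnique_path a b
  rw [hr p hp, hr q hq]


lemma exists_extreme (G : SimpleGraph V) [DecidableRel G.Adj] (hT : G.IsTree)
    (B : Finset V) (hB : ∀ v, v ∈ B ↔ G.degree v = 1)
    {S : Finset V} {x₀ x₁ : V} (hx₀ : x₀ ∈ S) (hx₁ : x₁ ∈ S) (hne : x₀ ≠ x₁)
    (hmax : ∀ a ∈ S, ∀ b ∈ S, G.dist a b ≤ G.dist x₀ x₁) :
    ExtremePt G B S x₀ := by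
  have hc := hT.isConnected
  set T : Finset V :=
    Finset.univ.filter (fun v => G.dist x₁ v = G.dist x₁ x₀ + G.dist x₀ v) with hTdef
  have hT0 : x₀ ∈ T := by simp [hTdef]
  obtain ⟨z, hzT, hzmax⟩ := T.exists_max_image (fun v => G.dist x₁ v) ⟨x₀, hT0⟩
  have hz : G.dist x₁ z = G.dist x₁ x₀ + G.dist x₀ z := (Finset.mem_filter.mp hzT).2
  have hpos : 0 < G.dist x₁ x₀ := hc.pos_dist_of_ne hne.symm
  have hL : 0 < G.dist x₁ z := by omega
  obtain ⟨p, hp, hpl⟩ := hc.exists_path_of_dist x₁ z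
  have hplpos : 0 < p.length := by omega
  set s := p.getVert (p.length - 1) with hsdef
  have hadj : G.Adj s z := by
    have h := p.adj_getVert_succ (i := p.length - 1) (by omega)
    rwa [show p.length - 1 + 1 = p.length by omega, p.getVert_length] at h
  have hs_mem : s ∈ p.support :=
    Walk.mem_support_iff_exists_getVert.mpr ⟨p.length - 1, rfl, by omega⟩
  have hds := (shortest_split hc p hpl hs_mem).2.2
  have hds1 : G.dist s z = 1 := dist_eq_one_iff_adj.mpr hadj
  -- every neighbor of z is s
  have key : ∀ u, G.Adj z u → u = s := by
    intro u hu
    have h1 : G.dist z u = 1 := dist_eq_one_iff_adj.mpr hu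
    have h1' : G.dist u z = 1 := dist_eq_one_iff_adj.mpr hu.symm
    rcases le_or_gt (G.dist x₁ u) (G.dist x₁ z) with hM | hM
    · obtain ⟨q, hq, hql⟩ := hc.exists_path_of_dist x₁ u
      have hznq : z ∉ q.support := by
        intro hzq
        have := (shortest_split hc q hql hzq).2.2
        omega
      have hq' : (q.append (Walk.cons hu.symm Walk.nil)).IsPath :=
        path_concat q hq hu.symm hznq
      have heq : q.append (Walk.cons hu.symm Walk.nil) = p := tree_path_unique hT _ _ hq' hp
      have humem : u ∈ p.support := by
        rw [← heq]
        exact Walk.subset_support_append_left _ _ (Walk.end_mem_support q)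
      have hdu := (shortest_split hc p hpl humem).2.2
      exact shortest_inj hc p hpl humem hs_mem (by omega)
    · exfalso
      have htri1 := hc.dist_triangle (u := x₁) (v := x₀) (w := u)
      have htri2 := hc.dist_triangle (u := x₀) (v := z) (w := u)
      have htri3 := hc.dist_triangle (u := x₁) (v := z) (w := u)
      have huT : u ∈ T := Finset.mem_filter.mpr ⟨Finset.mem_univ _, by omega⟩
      have := hzmax u huT
      beta_reduce at this
      omega
  have hzdeg : G.degree z = 1 := by
    have hnf : G.neighborFinset z = {s} := by
      ext u
      simp only [SimpleGraph.mem_neighborFinset, Finset.mem_singleton]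
      exact ⟨key u, fun h => h ▸ hadj.symm⟩
    rw [← SimpleGraph.card_neighborFinset_eq_degree, hnf, Finset.card_singleton]
  refine ⟨hx₀, z, (hB z).mpr hzdeg, ?_⟩
  intro y hy hyne
  have hmain : G.dist z x₀ < G.dist z y := by
    by_contra hle
    push_neg at hle
    have c1 : G.dist z x₁ = G.dist x₁ z := G.dist_comm ..
    have c2 : G.dist z x₀ = G.dist x₀ z := G.dist_comm ..
    have c3 : G.dist x₀ x₁ = G.dist x₁ x₀ := G.dist_comm ..
    have e1 := hc.dist_triangle (u := z) (v := y) (w := x₁)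
    have e2 := hmax y hy x₁ hx₁
    have e4 := hc.dist_triangle (u := z) (v := x₀) (w := x₁)
    have q1 : G.dist z y + G.dist y x₁ = G.dist z x₁ := by omega
    have q2 : G.dist z y = G.dist z x₀ := by omega
    have q3 : G.dist z x₀ + G.dist x₀ x₁ = G.dist z x₁ := by omega
    obtain ⟨w1, -, h1⟩ := hc.exists_path_of_dist z y
    obtain ⟨w2, -, h2⟩ := hc.exists_path_of_dist y x₁
    obtain ⟨w3, -, h3⟩ := hc.exists_path_of_dist z x₀
    obtain ⟨w4, -, h4⟩ := hc.exists_path_of_dist x₀ x₁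
    have hylen : (w1.append w2).length = G.dist z x₁ := by
      rw [Walk.length_append]; omega
    have hxlen : (w3.append w4).length = G.dist z x₁ := by
      rw [Walk.length_append]; omega
    have hyP := (w1.append w2).isPath_of_length_eq_dist hylen
    have hxP := (w3.append w4).isPath_of_length_eq_dist hxlen
    have heq : w1.append w2 = w3.append w4 := tree_path_unique hT _ _ hyP hxP
    have hymem : y ∈ (w3.append w4).support := by
      rw [← heq]
      exact Walk.subset_support_append_left _ _ (Walk.end_mem_support w1)
    have hxmem : x₀ ∈ (w3.append w4).support :=
      Walk.subset_support_append_left _ _ (Walk.end_mem_support w3)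
    exact hyne (shortest_inj hc _ hxlen hymem hxmem q2)
  have r0 : G.edist z x₀ = (G.dist z x₀ : ℕ∞) := by
    have h := edist_ne_top_iff_reachable.mpr (hc.preconnected z x₀)
    rw [SimpleGraph.dist, ENat.coe_toNat h]
  have r1 : G.edist z y = (G.dist z y : ℕ∞) := by
    have h := edist_ne_top_iff_reachable.mpr (hc.preconnected z y)
    rw [SimpleGraph.dist, ENat.coe_toNat h]
  rw [r0, r1]
  exact_mod_cast hmain

end TreeHelpers

/-- Every finite tree satisfies the Two-Points Condition, the boundary being the set of
vertices of degree 1 (leaves). -/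
theorem tree_twoPoints (G : SimpleGraph V) [DecidableRel G.Adj]
    (hT : G.IsTree)
    (B : Finset V) (hB : ∀ v, v ∈ B ↔ G.degree v = 1) :
    TwoPoints G B := by
  intro S hS hcard
  obtain ⟨a, ha, b, hb, hab⟩ := Finset.one_lt_card.mp hcard
  have hprod : ((a, b) : V × V) ∈ S ×ˢ S := Finset.mem_product.mpr ⟨ha, hb⟩
  obtain ⟨⟨x₀, x₁⟩, hmem, hmax⟩ :=
    (S ×ˢ S).exists_max_image (fun pr => G.dist pr.1 pr.2) ⟨(a, b), hprod⟩
  obtain ⟨hx₀, hx₁⟩ := Finset.mem_product.mp hmem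
  have hd : 0 < G.dist x₀ x₁ :=
    lt_of_lt_of_le (hT.isConnected.pos_dist_of_ne hab) (hmax (a, b) hprod)
  have hne : x₀ ≠ x₁ := by
    rintro rfl
    simp [SimpleGraph.dist_self] at hd
  have hmax' : ∀ u ∈ S, ∀ v ∈ S, G.dist u v ≤ G.dist x₀ x₁ := fun u hu v hv =>
    hmax (u, v) (Finset.mem_product.mpr ⟨hu, hv⟩)
  have hmax'' : ∀ u ∈ S, ∀ v ∈ S, G.dist u v ≤ G.dist x₁ x₀ := by
    intro u hu v hv
    rw [SimpleGraph.dist_comm (u := x₁) (v := x₀)]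
    exact hmax' u hu v hv
  exact ⟨x₀, x₁, hne, exists_extreme G hT B hB hx₀ hx₁ hne hmax',
    exists_extreme G hT B hB hx₁ hx₀ hne.symm hmax''⟩
end

section
/- Existence of a height function implies the Two-Points Condition: suppose h : G ∪ ∂G → ℝ satisfies (1) |h(x)-h(y)| ≤ 1 whenever x ~ y, and (2) for every x ∈ G the sets N_+(x) = {y ~ x : h(y) = h(x)+1} and N_-(x) = {y ~ x : h(y) = h(x)-1} each have exactly one element, while for z ∈ ∂G they have at most one element. Then every subset S ⊆ G with |S| ≥ 2 has at least two extreme points with respect to ∂G. -/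
open Finset

variable {V : Type*} [Fintype V] [DecidableEq V]

/-- Along any walk, `h` drops by at most the length. -/
private lemma walk_drop (G : SimpleGraph V) (h : V → ℝ)
    (hLip : ∀ x y, G.Adj x y → |h x - h y| ≤ 1) :
    ∀ {a b : V} (p : G.Walk a b), h a - h b ≤ p.length := by
  intro a b p
  induction p with
  | nil => simp
  | @cons u v w hadj p' ih =>
      have h1 := (abs_le.mp (hLip u v hadj)).2
      simp only [SimpleGraph.Walk.length_cons]
      push_cast
      linarith

/-- The (noncomputable) up-neighbour function. -/
private noncomputable def upF (G : SimpleGraph V) [DecidableRel G.Adj] (h : V → ℝ) (v : V) : V :=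
  if hc : (univ.filter (fun y => G.Adj v y ∧ h y = h v + 1)).Nonempty then hc.choose else v

private lemma upF_mem (G : SimpleGraph V) [DecidableRel G.Adj] (h : V → ℝ) (v : V)
    (hc : (univ.filter (fun y => G.Adj v y ∧ h y = h v + 1)).Nonempty) :
    G.Adj v (upF G h v) ∧ h (upF G h v) = h v + 1 := by
  have hs := hc.choose_spec
  rw [mem_filter] at hs
  rw [upF, dif_pos hc]
  exact hs.2

/-- A maximiser of `h` on `S` is an extreme point. -/
private lemma up_extreme (G : SimpleGraph V) [DecidableRel G.Adj] (B : Finset V)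
    (h : V → ℝ)
    (hLip : ∀ x y, G.Adj x y → |h x - h y| ≤ 1)
    (hInt : ∀ x, x ∉ B →
      (univ.filter (fun y => G.Adj x y ∧ h y = h x + 1)).card = 1 ∧
      (univ.filter (fun y => G.Adj x y ∧ h y = h x - 1)).card = 1)
    (hBnd : ∀ z ∈ B,
      (univ.filter (fun y => G.Adj z y ∧ h y = h z + 1)).card ≤ 1 ∧
      (univ.filter (fun y => G.Adj z y ∧ h y = h z - 1)).card ≤ 1)
    (S : Finset V) (hSB : ∀ v ∈ S, v ∉ B) (x : V) (hx : x ∈ S)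
    (hmax : ∀ y ∈ S, h y ≤ h x) : ExtremePt G B S x := by
  classical
  set c : ℕ → V := fun k => (upF G h)^[k] x with hc
  have hcsucc : ∀ k, c (k + 1) = upF G h (c k) := by
    intro k; simp [hc, Function.iterate_succ_apply']
  have hq : ∀ v, v ∉ B → G.Adj v (upF G h v) ∧ h (upF G h v) = h v + 1 := by
    intro v hv
    refine upF_mem G h v (card_pos.mp ?_)
    rw [(hInt v hv).1]; norm_num
  -- the chain eventually hits B
  have hex : ∃ k, c k ∈ B := by
    by_contra hcon
    push_neg at hcon
    have hh : ∀ k, h (c k) = h x + k := by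
      intro k
      induction k with
      | zero => simp [hc]
      | succ m ih =>
          rw [hcsucc, (hq _ (hcon m)).2, ih]
          push_cast; ring
    obtain ⟨a, b, hab, heq⟩ := Finite.exists_ne_map_eq_of_infinite c
    have h1 := hh a
    rw [heq, hh b] at h1
    exact hab (by exact_mod_cast (by linarith : (a : ℝ) = b))
  set n := Nat.find hex with hn
  have hnB : c n ∈ B := Nat.find_spec hex
  have hlt : ∀ i < n, c i ∉ B := fun i hi => Nat.find_min hex hi
  have hh : ∀ k ≤ n, h (c k) = h x + k := by
    intro k hk
    induction k with
    | zero => simp [hc]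
    | succ m ih =>
        rw [hcsucc, (hq _ (hlt m (by omega))).2, ih (by omega)]
        push_cast; ring
  have hadjc : ∀ k < n, G.Adj (c k) (c (k + 1)) := by
    intro k hk
    rw [hcsucc]
    exact (hq _ (hlt k hk)).1
  have hdist : ∀ k ≤ n, G.edist x (c k) ≤ k := by
    intro k hk
    induction k with
    | zero => simp [hc]
    | succ m ih =>
        have h1 : G.edist (c m) (c (m + 1)) ≤ 1 :=
          le_of_eq (SimpleGraph.edist_eq_one_iff_adj.mpr (hadjc m (by omega)))
        calc G.edist x (c (m + 1)) ≤ G.edist x (c m) + G.edist (c m) (c (m + 1)) :=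
              SimpleGraph.edist_triangle
          _ ≤ (m : ℕ∞) + 1 := add_le_add (ih (by omega)) h1
          _ = ((m + 1 : ℕ) : ℕ∞) := by push_cast; ring
  -- uniqueness of descending walks
  have down : ∀ (a b : V) (p : G.Walk a b) (k : ℕ), k ≤ n → a = c k → p.length ≤ k →
      h a - h b = p.length → b = c (k - p.length) := by
    intro a b p
    induction p with
    | nil =>
        intro k _ ha _ _
        simpa using ha
    | @cons u v w hadj p' ih =>
        intro k hkn ha hlen hdrop
        simp only [SimpleGraph.Walk.length_cons] at hlen hdrop ⊢
        have hlen' : p'.length + 1 ≤ k := hlen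
        have hk1 : 1 ≤ k := by omega
        have h1 : h u - h v ≤ 1 := (abs_le.mp (hLip u v hadj)).2
        have h2 : h v - h w ≤ p'.length := walk_drop G h hLip p'
        have hdrop' : h u - h w = p'.length + 1 := by
          rw [hdrop]; push_cast; ring
        have he1 : h v = h u - 1 := by linarith
        have he2 : h v - h w = p'.length := by linarith
        have hkk : k - 1 + 1 = k := by omega
        have hcadj : G.Adj (c k) (c (k - 1)) := by
          have := hadjc (k - 1) (by omega)
          rw [hkk] at this
          exact this.symm
        have hch : h (c (k - 1)) = h (c k) - 1 := by
          have ha1 := hh k hkn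
          have ha2 := hh (k - 1) (by omega)
          rw [ha1, ha2, Nat.cast_sub hk1]
          push_cast; ring
        have hcard : (univ.filter (fun y => G.Adj (c k) y ∧ h y = h (c k) - 1)).card ≤ 1 := by
          rcases eq_or_lt_of_le hkn with heq | hltn
          · exact (hBnd (c k) (by rw [heq]; exact hnB)).2
          · exact le_of_eq (hInt (c k) (hlt k hltn)).2
        have hv : v = c (k - 1) := by
          have hv1 : v ∈ univ.filter (fun y => G.Adj (c k) y ∧ h y = h (c k) - 1) := by
            rw [mem_filter]
            refine ⟨mem_univ _, ?_, ?_⟩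
            · rw [← ha]; exact hadj
            · rw [← ha]; linarith
          have hv2 : c (k - 1) ∈ univ.filter (fun y => G.Adj (c k) y ∧ h y = h (c k) - 1) := by
            rw [mem_filter]
            exact ⟨mem_univ _, hcadj, hch⟩
          exact card_le_one.mp hcard _ hv1 _ hv2
        have hres := ih (k - 1) (by omega) hv (by omega) (by rw [← he2])
        rw [show k - (p'.length + 1) = k - 1 - p'.length by omega]
        exact hres
  -- conclusion
  refine ⟨hx, c n, hnB, ?_⟩
  intro y hy hyx
  have hzx : G.edist (c n) x ≤ n := by
    rw [SimpleGraph.edist_comm]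
    exact hdist n le_rfl
  have hgt : (n : ℕ∞) < G.edist (c n) y := by
    rcases eq_or_ne (G.edist (c n) y) ⊤ with ht | ht
    · rw [ht]; exact ENat.coe_lt_top n
    · obtain ⟨p, hp⟩ := SimpleGraph.exists_walk_of_edist_ne_top ht
      by_contra hle
      push_neg at hle
      have hplen : p.length ≤ n := by
        have : (p.length : ℕ∞) ≤ (n : ℕ∞) := by rw [hp]; exact hle
        exact_mod_cast this
      have hdb : h (c n) - h y ≤ p.length := walk_drop G h hLip p
      have hhn : h (c n) = h x + n := hh n le_rfl
      have hyl : h y ≤ h x := hmax y hy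
      have hnp : (n : ℝ) ≤ p.length := by linarith
      have hpl : p.length = n := le_antisymm hplen (by exact_mod_cast hnp)
      have hdropeq : h (c n) - h y = p.length := by
        rw [hpl]
        have : (p.length : ℝ) ≤ n := by exact_mod_cast hplen
        linarith
      have := down (c n) y p n le_rfl rfl hplen hdropeq
      rw [hpl] at this
      simp [hc] at this
      exact hyx this
  exact lt_of_le_of_lt hzx hgt

/-- Existence of a height function implies the Two-Points Condition. -/
theorem height_implies_twoPoints (G : SimpleGraph V) [DecidableRel G.Adj] (B : Finset V)
    (h : V → ℝ)
    (hLip : ∀ x y, G.Adj x y → |h x - h y| ≤ 1)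
    (hInt : ∀ x, x ∉ B →
      (univ.filter (fun y => G.Adj x y ∧ h y = h x + 1)).card = 1 ∧
      (univ.filter (fun y => G.Adj x y ∧ h y = h x - 1)).card = 1)
    (hBnd : ∀ z ∈ B,
      (univ.filter (fun y => G.Adj z y ∧ h y = h z + 1)).card ≤ 1 ∧
      (univ.filter (fun y => G.Adj z y ∧ h y = h z - 1)).card ≤ 1) :
    TwoPoints G B := by
  classical
  intro S hSB hcard
  have hSne : S.Nonempty := card_pos.mp (by omega)
  obtain ⟨x₀, hx₀, hmax⟩ := S.exists_max_image h hSne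
  obtain ⟨x₁, hx₁, hmin⟩ := S.exists_min_image h hSne
  -- hypotheses for the flipped height function
  have hLip' : ∀ x y, G.Adj x y → |(fun v => -h v) x - (fun v => -h v) y| ≤ 1 := by
    intro x y hxy
    simpa [abs_sub_comm, neg_add_eq_sub] using hLip x y hxy
  have keyP : ∀ x : V,
      univ.filter (fun y => G.Adj x y ∧ (fun v => -h v) y = (fun v => -h v) x + 1) =
      univ.filter (fun y => G.Adj x y ∧ h y = h x - 1) := by
    intro x
    apply filter_congr
    intro y _
    simp only
    constructor
    · rintro ⟨ha, hb⟩; exact ⟨ha, by linarith⟩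
    · rintro ⟨ha, hb⟩; exact ⟨ha, by linarith⟩
  have keyM : ∀ x : V,
      univ.filter (fun y => G.Adj x y ∧ (fun v => -h v) y = (fun v => -h v) x - 1) =
      univ.filter (fun y => G.Adj x y ∧ h y = h x + 1) := by
    intro x
    apply filter_congr
    intro y _
    simp only
    constructor
    · rintro ⟨ha, hb⟩; exact ⟨ha, by linarith⟩
    · rintro ⟨ha, hb⟩; exact ⟨ha, by linarith⟩
  have hInt' : ∀ x, x ∉ B →
      (univ.filter (fun y => G.Adj x y ∧ (fun v => -h v) y = (fun v => -h v) x + 1)).card = 1 ∧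
      (univ.filter (fun y => G.Adj x y ∧ (fun v => -h v) y = (fun v => -h v) x - 1)).card = 1 := by
    intro x hxB
    rw [keyP, keyM]
    exact ⟨(hInt x hxB).2, (hInt x hxB).1⟩
  have hBnd' : ∀ z ∈ B,
      (univ.filter (fun y => G.Adj z y ∧ (fun v => -h v) y = (fun v => -h v) z + 1)).card ≤ 1 ∧
      (univ.filter (fun y => G.Adj z y ∧ (fun v => -h v) y = (fun v => -h v) z - 1)).card ≤ 1 := by
    intro z hzB
    rw [keyP, keyM]
    exact ⟨(hBnd z hzB).2, (hBnd z hzB).1⟩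
  have e₀ : ExtremePt G B S x₀ := up_extreme G B h hLip hInt hBnd S hSB x₀ hx₀ hmax
  by_cases hne : x₀ = x₁
  · -- h is constant on S; pick another point, also a maximiser
    obtain ⟨x₂, hx₂, hne2⟩ := exists_mem_ne (show (1:ℕ) < S.card by omega) x₀
    have hmax2 : ∀ y ∈ S, h y ≤ h x₂ := by
      intro y hy
      have h1 := hmax y hy
      have h2 := hmin x₂ hx₂
      rw [← hne] at h2
      linarith
    exact ⟨x₀, x₂, Ne.symm hne2, e₀,
      up_extreme G B h hLip hInt hBnd S hSB x₂ hx₂ hmax2⟩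
  · have hmin' : ∀ y ∈ S, (fun v => -h v) y ≤ (fun v => -h v) x₁ := by
      intro y hy
      simpa using hmin y hy
    exact ⟨x₀, x₁, hne, e₀,
      up_extreme G B (fun v => -h v) hLip' hInt' hBnd' S hSB x₁ hx₁ hmin'⟩
end

section
/- In the proof of the height-function criterion: if h satisfies the two conditions of the height-function criterion and x0 ∈ S is a point where h attains its maximum over S (with |S| ≥ 2), then x0 is an extreme point of S with respect to ∂G; moreover the boundary point realizing it is the endpoint of the unique maximal ascending path starting from x0. -/
open Finset

variable {V : Type*} [Fintype V] [DecidableEq V]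

set_option linter.unusedSectionVars false


/-- Existence of a maximal ascending path from any vertex. -/
lemma ascend_exists (G : SimpleGraph V) [DecidableRel G.Adj] (h : V → ℝ) :
    ∀ (k : ℕ) (x : V), (univ.filter (fun v => h x < h v)).card ≤ k →
      ∃ (n : ℕ) (p : ℕ → V), p 0 = x ∧
        (∀ i < n, G.Adj (p i) (p (i+1)) ∧ h (p (i+1)) = h (p i) + 1) ∧
        (univ.filter (fun y => G.Adj (p n) y ∧ h y = h (p n) + 1)) = ∅ := by
  intro k
  induction k with
  | zero =>
    intro x hx
    refine ⟨0, fun _ => x, rfl, by omega, ?_⟩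
    by_contra hne
    obtain ⟨y, hy⟩ := Finset.nonempty_iff_ne_empty.mpr hne
    simp only [mem_filter, mem_univ, true_and] at hy
    have : y ∈ univ.filter (fun v => h x < h v) := by
      simp only [mem_filter, mem_univ, true_and]; linarith [hy.2]
    simp [Finset.card_eq_zero.mp (Nat.le_zero.mp hx)] at this
  | succ k ih =>
    intro x hx
    by_cases hE : (univ.filter (fun y => G.Adj x y ∧ h y = h x + 1)) = ∅
    · exact ⟨0, fun _ => x, rfl, by omega, hE⟩
    · obtain ⟨y, hy⟩ := Finset.nonempty_iff_ne_empty.mpr hE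
      simp only [mem_filter, mem_univ, true_and] at hy
      have hsub : (univ.filter (fun v => h y < h v)) ⊂ (univ.filter (fun v => h x < h v)) := by
        refine Finset.ssubset_iff_of_subset ?_ |>.mpr ⟨y, ?_, ?_⟩
        · intro v hv
          simp only [mem_filter, mem_univ, true_and] at hv ⊢
          linarith [hy.2]
        · simp only [mem_filter, mem_univ, true_and]; linarith [hy.2]
        · simp
      have hcard : (univ.filter (fun v => h y < h v)).card ≤ k := by
        have := Finset.card_lt_card hsub
        omega
      obtain ⟨n, p, hp0, hstep, hend⟩ := ih y hcard
      refine ⟨n + 1, fun i => if i = 0 then x else p (i - 1), by simp, ?_, ?_⟩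
      · intro i hi
        rcases Nat.eq_zero_or_pos i with rfl | hpos
        · simpa [hp0] using hy
        · have h1 : i ≠ 0 := hpos.ne'
          have h2 : i + 1 ≠ 0 := by omega
          simp only [h1, h2, if_neg]
          have : i + 1 - 1 = (i - 1) + 1 := by omega
          rw [this]
          exact hstep (i - 1) (by omega)
      · simpa using hend

/-- Height increases along the ascending chain. -/
lemma chain_height (h : V → ℝ) {G : SimpleGraph V} (n : ℕ) (p : ℕ → V)
    (hstep : ∀ i < n, G.Adj (p i) (p (i+1)) ∧ h (p (i+1)) = h (p i) + 1) :
    ∀ i ≤ n, h (p i) = h (p 0) + i := by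
  intro i hi
  induction i with
  | zero => simp
  | succ j ihj =>
    have := (hstep j (by omega)).2
    rw [this, ihj (by omega)]
    push_cast; ring

/-- Walk from a chain. -/
lemma chain_walk (G : SimpleGraph V) : ∀ (n : ℕ) (p : ℕ → V),
    (∀ i < n, G.Adj (p i) (p (i+1))) → ∃ w : G.Walk (p 0) (p n), w.length = n := by
  intro n
  induction n with
  | zero => exact fun p _ => ⟨SimpleGraph.Walk.nil, rfl⟩
  | succ m ihm =>
    intro p hadj
    obtain ⟨w, hw⟩ := ihm p (fun i hi => hadj i (by omega))
    exact ⟨w.concat (hadj m (by omega)), by simp [hw]⟩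

/-- Lipschitz bound along a walk. -/
lemma walk_lip (G : SimpleGraph V) (h : V → ℝ)
    (hLip : ∀ x y, G.Adj x y → |h x - h y| ≤ 1) :
    ∀ {a b : V} (w : G.Walk a b), |h a - h b| ≤ w.length := by
  intro a b w
  induction w with
  | nil => simp
  | @cons u c v hadj w ih =>
    have h1 := hLip u c hadj
    calc |h u - h v| ≤ |h u - h c| + |h c - h v| := by
          have := abs_sub_le (h u) (h c) (h v); linarith
      _ ≤ 1 + w.length := by linarith
      _ = (w.cons hadj).length := by simp; ring


/-- A maximum point of the height function over `S` is an extreme point of `S`, realized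
by the boundary endpoint of the unique maximal ascending path starting from it. -/
theorem height_max_is_extreme (G : SimpleGraph V) [DecidableRel G.Adj] (B : Finset V)
    (h : V → ℝ)
    (hLip : ∀ x y, G.Adj x y → |h x - h y| ≤ 1)
    (hInt : ∀ x, x ∉ B →
      (univ.filter (fun y => G.Adj x y ∧ h y = h x + 1)).card = 1 ∧
      (univ.filter (fun y => G.Adj x y ∧ h y = h x - 1)).card = 1)
    (hBnd : ∀ z ∈ B,
      (univ.filter (fun y => G.Adj z y ∧ h y = h z + 1)).card ≤ 1 ∧
      (univ.filter (fun y => G.Adj z y ∧ h y = h z - 1)).card ≤ 1)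
    (S : Finset V) (hS : ∀ v ∈ S, v ∉ B) (hcard : 2 ≤ S.card)
    (x₀ : V) (hx₀ : x₀ ∈ S) (hmax : ∀ y ∈ S, h y ≤ h x₀) :
    ∃ z ∈ B,
      (∃ (n : ℕ) (p : ℕ → V), p 0 = x₀ ∧ p n = z ∧
        (∀ i < n, G.Adj (p i) (p (i+1)) ∧ h (p (i+1)) = h (p i) + 1) ∧
        (univ.filter (fun y => G.Adj z y ∧ h y = h z + 1)).card = 0) ∧
      (∀ y ∈ S, y ≠ x₀ → G.edist z x₀ < G.edist z y) := by
  -- ascending path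
  obtain ⟨n, p, hp0, hstep, hend⟩ := ascend_exists G h
    (univ.filter (fun v => h x₀ < h v)).card x₀ le_rfl
  set z := p n with hz
  -- z is a boundary vertex
  have hzB : z ∈ B := by
    by_contra hzb
    have := (hInt z hzb).1
    rw [hend] at this
    simp at this
  -- height along the path
  have hht : ∀ i ≤ n, h (p i) = h x₀ + i := by
    have := chain_height h n p hstep
    rwa [hp0] at this
  have hhz : h z = h x₀ + n := hht n le_rfl
  -- edist z x₀ ≤ n
  obtain ⟨w₀, hw₀⟩ := chain_walk G n p (fun i hi => (hstep i hi).1)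
  have hle : G.edist z x₀ ≤ (n : ℕ∞) := by
    rw [SimpleGraph.edist_comm, ← hp0]
    exact le_trans (SimpleGraph.edist_le w₀) (by rw [hw₀])
  -- uniqueness of descending neighbors
  have hdown : ∀ x y y', G.Adj x y → h y = h x - 1 → G.Adj x y' → h y' = h x - 1 → y = y' := by
    intro x y y' ha hy ha' hy'
    have hcard1 : (univ.filter (fun v => G.Adj x v ∧ h v = h x - 1)).card ≤ 1 := by
      by_cases hx : x ∈ B
      · exact (hBnd x hx).2
      · exact le_of_eq (hInt x hx).2
    have hmy : y ∈ univ.filter (fun v => G.Adj x v ∧ h v = h x - 1) := by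
      simp [ha, hy]
    have hmy' : y' ∈ univ.filter (fun v => G.Adj x v ∧ h v = h x - 1) := by
      simp [ha', hy']
    exact Finset.card_le_one.mp hcard1 y hmy y' hmy'
  refine ⟨z, hzB, ⟨n, p, hp0, rfl, hstep, by rw [hend]; simp⟩, ?_⟩
  intro y hyS hyne
  -- show n + 1 ≤ edist z y
  have hkey : (n : ℕ∞) + 1 ≤ G.edist z y := by
    by_contra hcon
    push_neg at hcon
    have hnetop : G.edist z y ≠ ⊤ := by
      intro htop; rw [htop] at hcon
      exact not_top_lt hcon
    obtain ⟨w, hw⟩ := SimpleGraph.exists_walk_of_edist_ne_top hnetop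
    have hwlt : (w.length : ℕ∞) < (n : ℕ∞) + 1 := by rw [hw]; exact hcon
    have hwle : w.length ≤ n := by
      have : (w.length : ℕ∞) < ((n + 1 : ℕ) : ℕ∞) := by push_cast; exact hwlt
      exact Nat.lt_succ_iff.mp (Nat.cast_lt.mp this)
    -- Lipschitz: h z - h y ≤ w.length
    have hlipw : |h z - h y| ≤ (w.length : ℝ) := walk_lip G h hLip w
    have hyx : h y ≤ h x₀ := hmax y hyS
    have hnle : (n : ℝ) ≤ w.length := by
      have : (n : ℝ) ≤ h z - h y := by rw [hhz]; linarith
      calc (n : ℝ) ≤ h z - h y := this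
        _ ≤ |h z - h y| := le_abs_self _
        _ ≤ w.length := hlipw
    have hwn : w.length = n := le_antisymm hwle (by exact_mod_cast hnle)
    have hyeq : h y = h x₀ := by
      have h1 : h z - h y ≤ (n : ℝ) := by
        calc h z - h y ≤ |h z - h y| := le_abs_self _
          _ ≤ w.length := hlipw
          _ = n := by rw [hwn]
      rw [hhz] at h1
      linarith
    -- every step of w descends by exactly 1
    have hdesc : ∀ i < n, h (w.getVert (i+1)) = h (w.getVert i) - 1 := by
      have hsum : ∑ i ∈ range n, (h (w.getVert i) - h (w.getVert (i+1))) = (n : ℝ) := by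
        rw [Finset.sum_range_sub' (fun i => h (w.getVert i))]
        have e0 : w.getVert 0 = z := w.getVert_zero
        have en : w.getVert n = y := by rw [← hwn]; exact w.getVert_length
        rw [e0, en, hhz, hyeq]; ring
      have hterm : ∀ i ∈ range n, h (w.getVert i) - h (w.getVert (i+1)) ≤ 1 := by
        intro i hi
        rw [Finset.mem_range] at hi
        have hadj := w.adj_getVert_succ (by omega : i < w.length)
        have := hLip _ _ hadj
        calc h (w.getVert i) - h (w.getVert (i+1))
            ≤ |h (w.getVert i) - h (w.getVert (i+1))| := le_abs_self _
          _ ≤ 1 := this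
      intro i hi
      by_contra hne
      have hlt : h (w.getVert i) - h (w.getVert (i+1)) < 1 := by
        have := hterm i (Finset.mem_range.mpr hi)
        rcases lt_or_eq_of_le this with h' | h'
        · exact h'
        · exact absurd (by linarith) hne
      have : ∑ j ∈ range n, (h (w.getVert j) - h (w.getVert (j+1))) < ∑ _j ∈ range n, (1 : ℝ) :=
        Finset.sum_lt_sum hterm ⟨i, Finset.mem_range.mpr hi, hlt⟩
      rw [hsum] at this
      simp at this
    -- the walk coincides with the reversed ascending path
    have huniq : ∀ i ≤ n, w.getVert i = p (n - i) := by
      intro i hi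
      induction i with
      | zero => simp [hz]
      | succ j ihj =>
        have hj : j < n := by omega
        have hwj := ihj (by omega)
        -- both candidates are descending neighbors of w.getVert j
        have hadj1 := w.adj_getVert_succ (by omega : j < w.length)
        have hh1 := hdesc j hj
        have hstep' := hstep (n - j - 1) (by omega)
        have e1 : n - j - 1 + 1 = n - j := by omega
        rw [e1] at hstep'
        have hadj2 : G.Adj (w.getVert j) (p (n - j - 1)) := by
          rw [hwj]; exact hstep'.1.symm
        have hh2 : h (p (n - j - 1)) = h (w.getVert j) - 1 := by
          rw [hwj]; linarith [hstep'.2]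
        have := hdown (w.getVert j) (w.getVert (j+1)) (p (n - j - 1)) hadj1 hh1 hadj2 hh2
        rwa [Nat.sub_sub] at this
    have : y = x₀ := by
      have := huniq n le_rfl
      rw [Nat.sub_self, hp0] at this
      rw [← this, ← hwn]
      exact w.getVert_length.symm
    exact hyne this
  calc G.edist z x₀ ≤ (n : ℕ∞) := hle
    _ < (n : ℕ∞) + 1 := by exact_mod_cast Nat.lt_succ_self n
    _ ≤ G.edist z y := hkey
end

section
/- Extreme points can be realized avoiding intermediate boundary points: if x0 ∈ S ⊆ G is an extreme point of S realized by some z ∈ ∂G, then there exists z0 ∈ ∂G also realizing the extreme point condition for x0 such that no shortest path from x0 to z0 passes through any boundary point other than z0. -/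
open Finset

variable {V : Type*} [Fintype V] [DecidableEq V]

/-- An extreme point can always be realized by a boundary point such that no shortest
path to it passes through any other boundary point. -/
theorem extreme_point_avoiding_boundary (G : SimpleGraph V) (B : Finset V)
    (hconn : G.Connected)
    (S : Finset V) (hS : ∀ v ∈ S, v ∉ B)
    (x₀ : V) (hx₀ : ExtremePt G B S x₀) :
    ∃ z₀ ∈ B,
      (∀ y ∈ S, y ≠ x₀ → G.edist z₀ x₀ < G.edist z₀ y) ∧
      (∀ p : G.Walk x₀ z₀, p.length = G.dist x₀ z₀ →
        ∀ w ∈ p.support, w ∈ B → w = z₀) := by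
  classical
  obtain ⟨hx₀S, z, hzB, hz⟩ := hx₀
  have hedist : ∀ u v : V, G.edist u v = (G.dist u v : ℕ∞) := fun u v =>
    ((ENat.coe_toNat (SimpleGraph.edist_ne_top_iff_reachable.mpr (hconn u v))).symm)
  set T : Finset V := B.filter (fun w => ∀ y ∈ S, y ≠ x₀ → G.edist w x₀ < G.edist w y) with hT
  have hzT : z ∈ T := by
    simp only [hT, Finset.mem_filter]
    exact ⟨hzB, hz⟩
  obtain ⟨z₀, hz₀T, hmin⟩ := T.exists_min_image (fun w => G.dist x₀ w) ⟨z, hzT⟩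
  simp only [hT, Finset.mem_filter] at hz₀T
  refine ⟨z₀, hz₀T.1, hz₀T.2, ?_⟩
  intro p hp w hw hwB
  by_contra hne
  obtain ⟨q, r, hqr⟩ := SimpleGraph.Walk.mem_support_iff_exists_append.mp hw
  have hlen : q.length + r.length = G.dist x₀ z₀ := by
    rw [← hp, hqr, SimpleGraph.Walk.length_append]
  have hq' : G.dist x₀ w ≤ q.length := SimpleGraph.dist_le q
  have hr' : G.dist w z₀ ≤ r.length := SimpleGraph.dist_le r
  have htri : G.dist x₀ z₀ ≤ G.dist x₀ w + G.dist w z₀ := hconn.dist_triangle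
  have hsplit : G.dist x₀ w + G.dist w z₀ = G.dist x₀ z₀ := by omega
  have hwpos : 0 < G.dist w z₀ := hconn.pos_dist_of_ne hne
  have hwT : w ∈ T := by
    simp only [hT, Finset.mem_filter]
    refine ⟨hwB, fun y hy hyne => ?_⟩
    have h1 : G.edist z₀ x₀ < G.edist z₀ y := hz₀T.2 y hy hyne
    have h2 : G.edist z₀ y ≤ G.edist z₀ w + G.edist w y := SimpleGraph.edist_triangle
    simp only [hedist] at h1 h2 ⊢
    have hd1 : G.dist z₀ x₀ < G.dist z₀ y := by exact_mod_cast h1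
    have hd2 : G.dist z₀ y ≤ G.dist z₀ w + G.dist w y := by exact_mod_cast h2
    have hc1 : G.dist z₀ x₀ = G.dist x₀ z₀ := SimpleGraph.dist_comm ..
    have hc2 : G.dist z₀ w = G.dist w z₀ := SimpleGraph.dist_comm ..
    have hc3 : G.dist w x₀ = G.dist x₀ w := SimpleGraph.dist_comm ..
    have : G.dist w x₀ < G.dist w y := by omega
    exact_mod_cast this
  have := hmin w hwT
  omega
end

section
/- The Two-Points Condition is preserved under graph reduction: if (G, ∂G, E) satisfies the Two-Points Condition, then the reduced graph (G, ∂G, E_re), obtained by removing all edges between boundary vertices, also satisfies the Two-Points Condition with respect to its own distance function d_re. -/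
open Finset

variable {V : Type*} [Fintype V] [DecidableEq V]

lemma reduced_le (G : SimpleGraph V) (B : Finset V) : reduced G B ≤ G :=
  fun _ _ h => h.1

lemma walk_reduce {G : SimpleGraph V} {B : Finset V} {x₀ : V} :
    ∀ {z : V} (p : G.Walk z x₀),
      (reduced G B).edist z x₀ ≤ p.length ∨
      ∃ z' ∈ B, (reduced G B).edist z' x₀ + G.edist z z' ≤ p.length := by
  intro z p
  induction p with
  | nil => left; simp
  | @cons u v w h p ih =>
    rw [SimpleGraph.Walk.length_cons]
    push_cast
    have huv : G.edist u v ≤ 1 := (SimpleGraph.edist_eq_one_iff_adj.mpr h).le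
    rcases ih with hle | ⟨z', hz'B, hle⟩
    · by_cases hv : v ∈ B
      · right
        refine ⟨v, hv, ?_⟩
        calc (reduced G B).edist v w + G.edist u v ≤ (p.length : ℕ∞) + 1 :=
              add_le_add hle huv
          _ = _ := rfl
      · left
        have hadj : (reduced G B).Adj u v := ⟨h, Or.inr hv⟩
        calc (reduced G B).edist u w
            ≤ (reduced G B).edist u v + (reduced G B).edist v w :=
              SimpleGraph.edist_triangle
          _ ≤ 1 + (p.length : ℕ∞) :=
              add_le_add (SimpleGraph.edist_eq_one_iff_adj.mpr hadj).le hle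
          _ = (p.length : ℕ∞) + 1 := add_comm _ _
    · right
      refine ⟨z', hz'B, ?_⟩
      calc (reduced G B).edist z' w + G.edist u z'
          ≤ (reduced G B).edist z' w + (G.edist u v + G.edist v z') :=
            add_le_add_right SimpleGraph.edist_triangle _
        _ = ((reduced G B).edist z' w + G.edist v z') + G.edist u v := by ring
        _ ≤ (p.length : ℕ∞) + 1 := add_le_add hle huv

lemma extreme_reduce {G : SimpleGraph V} {B : Finset V} {S : Finset V} {x₀ : V}
    (hS : ∀ v ∈ S, v ∉ B) (hcard : 2 ≤ S.card) (hx : ExtremePt G B S x₀) :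
    ExtremePt (reduced G B) B S x₀ := by
  obtain ⟨hx₀S, z, hzB, hz⟩ := hx
  have hx₀B : x₀ ∉ B := hS x₀ hx₀S
  obtain ⟨y, hyS, hyne⟩ := Finset.exists_mem_ne (lt_of_lt_of_le one_lt_two hcard) x₀
  have hfin : G.edist z x₀ ≠ ⊤ := (lt_of_lt_of_le (hz y hyS hyne) le_top).ne
  obtain ⟨p, hp⟩ := SimpleGraph.exists_walk_of_edist_ne_top hfin
  have key : ∃ z' ∈ B, (reduced G B).edist z' x₀ + G.edist z z' ≤ G.edist z x₀ := by
    rcases walk_reduce (B := B) p with hle | ⟨z', hz'B, hle⟩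
    · exact ⟨z, hzB, by simpa [hp] using hle⟩
    · exact ⟨z', hz'B, by rwa [hp] at hle⟩
  obtain ⟨z', hz'B, hle⟩ := key
  refine ⟨hx₀S, z', hz'B, fun y hyS hyne => ?_⟩
  have hc : G.edist z z' ≠ ⊤ :=
    (lt_of_le_of_lt (le_trans le_add_self hle) (lt_of_lt_of_le (hz _ hyS hyne) le_top)).ne
  have hchain : G.edist z z' + (reduced G B).edist z' x₀ <
      G.edist z z' + (reduced G B).edist z' y := by
    calc G.edist z z' + (reduced G B).edist z' x₀
        = (reduced G B).edist z' x₀ + G.edist z z' := add_comm _ _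
      _ ≤ G.edist z x₀ := hle
      _ < G.edist z y := hz y hyS hyne
      _ ≤ G.edist z z' + G.edist z' y := SimpleGraph.edist_triangle
      _ ≤ G.edist z z' + (reduced G B).edist z' y :=
          add_le_add_right (SimpleGraph.edist_anti (reduced_le G B)) _
  exact (WithTop.add_lt_add_iff_left hc).mp hchain

/-- The Two-Points Condition is preserved when passing to the reduced graph, obtained by
removing all edges between boundary vertices. -/
theorem twoPoints_reduced (G : SimpleGraph V) (B : Finset V)
    (hTP : TwoPoints G B) :
    TwoPoints (reduced G B) B := by
  intro S hS hcard
  obtain ⟨x₀, x₁, hne, h0, h1⟩ := hTP S hS hcard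
  exact ⟨x₀, x₁, hne, extreme_reduce hS hcard h0, extreme_reduce hS hcard h1⟩
end

section
/- Distance monotonicity near the boundary: let (G, ∂G, E) be a finite connected graph with boundary whose reduced graph is connected, and suppose that for any z ∈ ∂G and any x, y ∈ G with x ~ z and y ~ z, one has x ~ y. Then for any x ∈ G and z ∈ ∂G with x ~ z, and any vertex p ≠ z, we have d_re(x, p) ≤ d_re(z, p), where d_re is the distance of the reduced graph. -/
open Finset

variable {V : Type*} [Fintype V] [DecidableEq V]

/-- Distance monotonicity near the boundary in the reduced graph. -/
theorem dist_mono_near_boundary (G : SimpleGraph V) (B : Finset V)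
    (hconn : G.Connected)
    (hconnre : (reduced G B).Connected)
    (hadj : ∀ z ∈ B, ∀ x y : V, x ∉ B → y ∉ B → G.Adj x z → G.Adj y z → x ≠ y → G.Adj x y)
    (x z p : V) (hx : x ∉ B) (hz : z ∈ B) (hxz : G.Adj x z) (hp : p ≠ z) :
    (reduced G B).dist x p ≤ (reduced G B).dist z p := by
  classical
  -- take a shortest walk from z to p in the reduced graph
  obtain ⟨w, hw⟩ := (hconnre z p).exists_walk_length_eq_dist
  have hzp : z ≠ p := fun h => hp h.symm
  cases w with
  | nil => exact absurd rfl hzp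
  | cons h q =>
    rename_i y
    -- h : (reduced G B).Adj z y, q : walk y p
    have hyB : y ∉ B := h.2.resolve_left (fun hc => hc hz)
    have hlen : q.length + 1 = (reduced G B).dist z p := by
      simpa [SimpleGraph.Walk.length_cons] using hw
    have hyp : (reduced G B).dist y p ≤ q.length :=
      SimpleGraph.dist_le q
    have hxy : (reduced G B).dist x y ≤ 1 := by
      rcases eq_or_ne x y with rfl | hne
      · simp [SimpleGraph.dist_self]
      · have : G.Adj x y := hadj z hz x y hx hyB hxz h.1.symm hne
        have : (reduced G B).Adj x y := ⟨this, Or.inl hx⟩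
        exact le_of_eq (SimpleGraph.dist_eq_one_iff_adj.mpr this)
    calc (reduced G B).dist x p ≤ (reduced G B).dist x y + (reduced G B).dist y p :=
          hconnre.dist_triangle
      _ ≤ 1 + q.length := add_le_add hxy hyp
      _ = (reduced G B).dist z p := by omega
end

section
/- Wavefront lemma (first part): let G be a finite connected weighted graph with boundary whose reduced graph is connected and satisfying the condition that boundary neighbors of a common boundary vertex are adjacent. Let x ∈ G, z ∈ ∂G, t0 = d_re(x,z), and let W be an initial value with d_nu W|_{∂G} = 0, W(z) = 0, and W vanishing on all interior vertices of the d_re-ball of radius t0 around z except possibly x. If W(x) > 0, then t0 ≥ 2, the wave u^W satisfies u^W(z,t) = 0 for all t < t0, and u^W(z,t0) > 0. -/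
open Finset

variable {V : Type*} [Fintype V] [DecidableEq V]

/-- Wavefront lemma, first part: a wave generated by an initial value positive at `x`
and vanishing on the rest of the interior ball of radius `t₀ = d_re(x,z)` around a
boundary vertex `z` first reaches `z` exactly at time `t₀ ≥ 2`, with a positive value. -/
theorem wavefront_pos (G : SimpleGraph V) [DecidableRel G.Adj] (B : Finset V)
    (μ : V → ℝ) (g : V → V → ℝ) (q : V → ℝ)
    (hμ : ∀ v, 0 < μ v)
    (hgpos : ∀ a b, G.Adj a b → 0 < g a b)
    (hgsymm : ∀ a b, g a b = g b a)
    (hconn : G.Connected)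
    (hconnre : (reduced G B).Connected)
    (hadj : ∀ z ∈ B, ∀ a b : V, a ∉ B → b ∉ B → G.Adj a z → G.Adj b z → a ≠ b → G.Adj a b)
    (x z : V) (hx : x ∉ B) (hz : z ∈ B)
    (W : V → ℝ)
    (hWn : ∀ w ∈ B, nder G B μ g W w = 0)
    (hWz : W z = 0)
    (hWball : ∀ y, y ∉ B → (reduced G B).dist z y ≤ (reduced G B).dist x z →
      y ≠ x → W y = 0)
    (hWx : 0 < W x)
    (u : V → ℕ → ℝ) (hu : IsWave G B μ g q W u) :
    2 ≤ (reduced G B).dist x z ∧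
      (∀ t, t < (reduced G B).dist x z → u z t = 0) ∧
      0 < u z ((reduced G B).dist x z) := by
  classical
  obtain ⟨hwave, hneu, hvel, hinit⟩ := hu
  set d := (reduced G B).dist x z with hd
  have hreach : ∀ a b : V, (reduced G B).Reachable a b := fun a b => hconnre.preconnected a b
  have hdzx : (reduced G B).dist z x = d := by rw [hd, SimpleGraph.dist_comm]
  have hxz : x ≠ z := fun h => hx (h ▸ hz)
  have hd1 : 1 ≤ d := hconnre.pos_dist_of_ne hxz
  -- adjacency in the reduced graph
  have hRiff : ∀ a b : V, (reduced G B).Adj a b ↔ (G.Adj a b ∧ (a ∉ B ∨ b ∉ B)) :=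
    fun a b => Iff.rfl
  have hadj_dist : ∀ y w : V, y ∉ B → G.Adj y w →
      (reduced G B).dist z w ≤ (reduced G B).dist z y + 1 := by
    intro y w hy hyw
    have h1 : (reduced G B).Adj y w := ⟨hyw, Or.inl hy⟩
    have h2 : (reduced G B).dist y w = 1 := SimpleGraph.dist_eq_one_iff_adj.mpr h1
    have h3 : (reduced G B).dist z w ≤ (reduced G B).dist z y + (reduced G B).dist y w :=
      hconnre.dist_triangle
    omega
  -- every boundary vertex has an interior neighbor
  have hNne : ∀ w, w ∈ B → ∃ a, a ∉ B ∧ G.Adj a w := by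
    intro w hw
    obtain ⟨p⟩ := hreach w x
    cases p with
    | nil => exact absurd hw hx
    | cons h q =>
      exact ⟨_, h.2.resolve_left (fun h' => h' hw), h.1.symm⟩
  have hSpos : ∀ w, w ∈ B →
      0 < ∑ a ∈ univ.filter (fun a => G.Adj a w ∧ a ∉ B), g a w := by
    intro w hw
    obtain ⟨a, haB, haw⟩ := hNne w hw
    apply Finset.sum_pos
    · intro i hi
      exact hgpos _ _ (mem_filter.mp hi).2.1
    · exact ⟨a, mem_filter.mpr ⟨mem_univ a, haw, haB⟩⟩
  -- slaving identity from the Neumann condition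
  have hslave : ∀ (f : V → ℝ) (w : V), w ∈ B → nder G B μ g f w = 0 →
      f w * (∑ a ∈ univ.filter (fun a => G.Adj a w ∧ a ∉ B), g a w)
        = ∑ a ∈ univ.filter (fun a => G.Adj a w ∧ a ∉ B), g a w * f a := by
    intro f w hw h
    unfold nder at h
    have hμw : (μ w)⁻¹ ≠ 0 := inv_ne_zero (ne_of_gt (hμ w))
    have h0 : ∑ a ∈ univ.filter (fun a => G.Adj a w ∧ a ∉ B), g a w * (f a - f w) = 0 :=
      (mul_eq_zero.mp h).resolve_left hμw
    have h1 : ∑ a ∈ univ.filter (fun a => G.Adj a w ∧ a ∉ B),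
        (g a w * f a - g a w * f w) = 0 := by
      simpa [mul_sub] using h0
    rw [Finset.sum_sub_distrib, ← Finset.sum_mul] at h1
    linarith
  have hbd0 : ∀ (t : ℕ) (w : V), w ∈ B → (∀ a, a ∉ B → G.Adj a w → u a t = 0) →
      u w t = 0 := by
    intro t w hw hall
    have h := hslave (fun v => u v t) w hw (hneu w hw t)
    have hzero : ∑ a ∈ univ.filter (fun a => G.Adj a w ∧ a ∉ B), g a w * u a t = 0 := by
      apply Finset.sum_eq_zero
      intro a ha
      rw [hall a (mem_filter.mp ha).2.2 (mem_filter.mp ha).2.1, mul_zero]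
    rw [hzero] at h
    exact (mul_eq_zero.mp h).resolve_right (ne_of_gt (hSpos w hw))
  have hbdnn : ∀ (t : ℕ) (w : V), w ∈ B → (∀ a, a ∉ B → G.Adj a w → 0 ≤ u a t) →
      0 ≤ u w t := by
    intro t w hw hall
    have h := hslave (fun v => u v t) w hw (hneu w hw t)
    have hnn : 0 ≤ ∑ a ∈ univ.filter (fun a => G.Adj a w ∧ a ∉ B), g a w * u a t := by
      apply Finset.sum_nonneg
      intro a ha
      exact mul_nonneg (hgpos _ _ (mem_filter.mp ha).2.1).le
        (hall a (mem_filter.mp ha).2.2 (mem_filter.mp ha).2.1)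
    have hS := hSpos w hw
    nlinarith
  have hbdpos : ∀ (t : ℕ) (w : V), w ∈ B → (∀ a, a ∉ B → G.Adj a w → 0 ≤ u a t) →
      (∃ a, a ∉ B ∧ G.Adj a w ∧ 0 < u a t) → 0 < u w t := by
    intro t w hw hall hex
    have h := hslave (fun v => u v t) w hw (hneu w hw t)
    obtain ⟨a0, ha0B, ha0w, ha0⟩ := hex
    have hpos : 0 < ∑ a ∈ univ.filter (fun a => G.Adj a w ∧ a ∉ B), g a w * u a t := by
      apply Finset.sum_pos'
      · intro a ha
        exact mul_nonneg (hgpos _ _ (mem_filter.mp ha).2.1).le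
          (hall a (mem_filter.mp ha).2.2 (mem_filter.mp ha).2.1)
      · exact ⟨a0, mem_filter.mpr ⟨mem_univ a0, ha0w, ha0B⟩,
          mul_pos (hgpos _ _ ha0w) ha0⟩
    have hS := hSpos w hw
    nlinarith
  -- support lemma
  have Z : ∀ t : ℕ, ∀ y, y ∉ B → y ≠ x → t + (reduced G B).dist z y ≤ d → u y t = 0 := by
    intro t
    induction t using Nat.twoStepInduction with
    | zero =>
      intro y hy hyx hty
      rw [hinit]
      exact hWball y hy (by omega) hyx
    | one =>
      intro y hy hyx hty
      rw [hvel y hy, hinit]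
      exact hWball y hy (by omega) hyx
    | more n ihn ihn1 =>
      intro y hy hyx hty
      have h1 : u y (n+1) = 0 := ihn1 y hy hyx (by omega)
      have h0 : u y n = 0 := ihn y hy hyx (by omega)
      have hnbr0 : ∀ w, G.Adj y w → u w (n+1) = 0 := by
        intro w hyw
        by_cases hwB : w ∈ B
        · apply hbd0 (n+1) w hwB
          intro a haB haw
          have hda : (reduced G B).dist z a ≤ (reduced G B).dist z y + 1 := by
            by_cases hay : a = y
            · subst hay; omega
            · exact hadj_dist y a hy (hadj w hwB y a hy haB hyw haw (fun h => hay h.symm))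
          have hax : a ≠ x := by
            intro h; rw [h, hdzx] at hda; omega
          exact ihn1 a haB hax (by omega)
        · have hdw := hadj_dist y w hy hyw
          have hwx : w ≠ x := by
            intro h; rw [h, hdzx] at hdw; omega
          exact ihn1 w hwB hwx (by omega)
      have hlap : lap G μ g (fun v => u v (n+1)) y = 0 := by
        unfold lap
        rw [mul_eq_zero]
        right
        apply Finset.sum_eq_zero
        intro w hwmem
        have hyw : G.Adj y w := (mem_filter.mp hwmem).2
        show g y w * (u w (n+1) - u y (n+1)) = 0
        rw [hnbr0 w hyw, h1, sub_zero, mul_zero]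
      have heq := hwave y hy (n+1) (by omega)
      simp only [Nat.add_sub_cancel] at heq
      rw [hlap, h1, h0] at heq
      show u y (n+1+1) = 0
      linarith
  -- front nonnegativity
  have FZ : ∀ t : ℕ, 1 ≤ t → ∀ y, y ∉ B → t + (reduced G B).dist z y ≤ d + 1 →
      0 ≤ u y t := by
    intro t ht
    induction t, ht using Nat.le_induction with
    | base =>
      intro y hy hty
      rw [hvel y hy, hinit]
      by_cases hyx : y = x
      · subst hyx; exact hWx.le
      · rw [hWball y hy (by omega) hyx]
    | succ t ht ih =>
      intro y hy hty
      rcases Nat.lt_or_ge (t + 1 + (reduced G B).dist z y) (d + 1) with hlt | hge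
      · have hyx : y ≠ x := by
          intro h; rw [h, hdzx] at hlt; omega
        rw [Z (t+1) y hy hyx (by omega)]
      · have hdzy : t + 1 + (reduced G B).dist z y = d + 1 := le_antisymm hty hge
        have hyx : y ≠ x := by
          intro h; rw [h, hdzx] at hdzy; omega
        have h1 : u y t = 0 := Z t y hy hyx (by omega)
        have h0 : u y (t-1) = 0 := Z (t-1) y hy hyx (by omega)
        have hval : ∀ a, a ∉ B → (reduced G B).dist z a ≤ (reduced G B).dist z y + 1 →
            0 ≤ u a t := by
          intro a haB hda
          rcases Nat.lt_or_ge (t + (reduced G B).dist z a) (d + 1) with hlt2 | hge2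
          · have hax : a ≠ x := by
              intro h; rw [h, hdzx] at hlt2; omega
            rw [Z t a haB hax (by omega)]
          · exact ih a haB (by omega)
        have hnbr : ∀ w, G.Adj y w → 0 ≤ u w t := by
          intro w hyw
          by_cases hwB : w ∈ B
          · apply hbdnn t w hwB
            intro a haB haw
            apply hval a haB
            by_cases hay : a = y
            · subst hay; omega
            · exact hadj_dist y a hy (hadj w hwB y a hy haB hyw haw (fun h => hay h.symm))
          · exact hval w hwB (hadj_dist y w hy hyw)
        have hlap : 0 ≤ lap G μ g (fun v => u v t) y := by
          unfold lap
          apply mul_nonneg (inv_pos.mpr (hμ y)).le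
          apply Finset.sum_nonneg
          intro w hwmem
          have hyw : G.Adj y w := (mem_filter.mp hwmem).2
          show 0 ≤ g y w * (u w t - u y t)
          rw [h1, sub_zero]
          exact mul_nonneg (hgpos _ _ hyw).le (hnbr w hyw)
        have heq := hwave y hy t ht
        rw [h1, h0] at heq
        linarith
  -- geodesic step lemma
  have hstep : ∀ m : ℕ, 1 ≤ m → ∀ y, y ∉ B → (reduced G B).dist z y = m + 1 →
      ∃ w, w ∉ B ∧ G.Adj y w ∧ (reduced G B).dist z w = m := by
    intro m hm y hy hdy
    obtain ⟨p, hp⟩ := (hreach y z).exists_walk_length_eq_dist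
    rw [SimpleGraph.dist_comm, hdy] at hp
    cases p with
    | nil => exact absurd hz hy
    | cons h q =>
      rename_i v
      rw [SimpleGraph.Walk.length_cons] at hp
      have hlen : q.length = m := by omega
      have hdv_le : (reduced G B).dist z v ≤ m := by
        rw [SimpleGraph.dist_comm]
        exact hlen ▸ SimpleGraph.dist_le q
      have hd1v : (reduced G B).dist y v = 1 := SimpleGraph.dist_eq_one_iff_adj.mpr h
      have htri : (reduced G B).dist z y ≤
          (reduced G B).dist z v + (reduced G B).dist v y := hconnre.dist_triangle
      rw [show (reduced G B).dist v y = (reduced G B).dist y v from SimpleGraph.dist_comm] at htri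
      have hdv : (reduced G B).dist z v = m := by omega
      by_cases hvB : v ∈ B
      · exfalso
        cases q with
        | nil =>
          rw [SimpleGraph.dist_self] at hdv; omega
        | cons h2 q2 =>
          rename_i v2
          rw [SimpleGraph.Walk.length_cons] at hlen
          have hv2B : v2 ∉ B := h2.2.resolve_left (fun hh => hh hvB)
          have hdv2 : (reduced G B).dist z v2 ≤ m - 1 := by
            rw [SimpleGraph.dist_comm]
            calc (reduced G B).dist v2 z ≤ q2.length := SimpleGraph.dist_le q2
            _ = m - 1 := by omega
          have hyv2 : y ≠ v2 := by
            intro he; rw [he] at hdy; omega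
          have hyv2adj : G.Adj y v2 := hadj v hvB y v2 hy hv2B h.1 h2.1.symm hyv2
          have := hadj_dist v2 y hv2B hyv2adj.symm
          omega
      · exact ⟨v, hvB, h.1, hdv⟩
  -- t₀ ≥ 2
  have hd2 : 2 ≤ d := by
    rcases Nat.lt_or_ge d 2 with hlt | hge
    · exfalso
      have hdeq : d = 1 := by omega
      have hxzadj : (reduced G B).Adj x z :=
        SimpleGraph.dist_eq_one_iff_adj.mp (by rw [← hd]; omega)
      have hW := hslave W z hz (hWn z hz)
      rw [hWz, zero_mul] at hW
      have hsum : ∑ a ∈ univ.filter (fun a => G.Adj a z ∧ a ∉ B), g a z * W a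
          = g x z * W x := by
        apply Finset.sum_eq_single_of_mem x
          (mem_filter.mpr ⟨mem_univ x, hxzadj.1, hx⟩)
        intro b hb hbx
        have hbB : b ∉ B := (mem_filter.mp hb).2.2
        have hbz : G.Adj b z := (mem_filter.mp hb).2.1
        have hdb : (reduced G B).dist z b ≤ 1 :=
          (SimpleGraph.dist_eq_one_iff_adj.mpr (show (reduced G B).Adj z b from ⟨hbz.symm, Or.inr hbB⟩)).le
        rw [hWball b hbB (by omega) hbx, mul_zero]
      rw [hsum] at hW
      have := mul_pos (hgpos x z hxzadj.1) hWx
      linarith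
    · exact hge
  -- positivity chain
  have chain : ∀ j : ℕ, j + 1 ≤ d →
      ∃ y, y ∉ B ∧ (reduced G B).dist z y = d - j ∧ 0 < u y (j+1) := by
    intro j
    induction j with
    | zero =>
      intro _
      refine ⟨x, hx, by simpa using hdzx, ?_⟩
      rw [hvel x hx, hinit]
      exact hWx
    | succ j ih =>
      intro hj1
      obtain ⟨y, hy, hdy, hpos⟩ := ih (by omega)
      obtain ⟨w, hwB, hyw, hdw⟩ := hstep (d - j - 1) (by omega) y hy (by omega)
      refine ⟨w, hwB, by omega, ?_⟩
      have hwx : w ≠ x := by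
        intro h; rw [h, hdzx] at hdw; omega
      have h1 : u w (j+1) = 0 := Z (j+1) w hwB hwx (by omega)
      have h0 : u w j = 0 := Z j w hwB hwx (by omega)
      have heq := hwave w hwB (j+1) (by omega)
      simp only [Nat.add_sub_cancel] at heq
      have hval : ∀ a, a ∉ B → (reduced G B).dist z a ≤ (reduced G B).dist z w + 1 →
          0 ≤ u a (j+1) := by
        intro a haB hda
        exact FZ (j+1) (by omega) a haB (by omega)
      have hlap : 0 < lap G μ g (fun v => u v (j+1)) w := by
        unfold lap
        apply mul_pos (inv_pos.mpr (hμ w))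
        apply Finset.sum_pos'
        · intro v hv
          have hwv : G.Adj w v := (mem_filter.mp hv).2
          have hvnn : 0 ≤ u v (j+1) := by
            by_cases hvB : v ∈ B
            · apply hbdnn (j+1) v hvB
              intro a haB hav
              apply hval a haB
              by_cases haw : a = w
              · subst haw; omega
              · exact hadj_dist w a hwB
                  (hadj v hvB w a hwB haB hwv hav (fun h => haw h.symm))
            · exact hval v hvB (hadj_dist w v hwB hwv)
          show 0 ≤ g w v * (u v (j+1) - u w (j+1))
          rw [h1, sub_zero]
          exact mul_nonneg (hgpos _ _ hwv).le hvnn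
        · refine ⟨y, mem_filter.mpr ⟨mem_univ y, hyw.symm⟩, ?_⟩
          show 0 < g w y * (u y (j+1) - u w (j+1))
          rw [h1, sub_zero]
          exact mul_pos (hgpos _ _ hyw.symm) hpos
      rw [h1, h0] at heq
      show 0 < u w (j+1+1)
      linarith
  refine ⟨hd2, ?_, ?_⟩
  · intro t ht
    apply hbd0 t z hz
    intro a haB haz
    have hdza : (reduced G B).dist z a ≤ 1 :=
      (SimpleGraph.dist_eq_one_iff_adj.mpr (show (reduced G B).Adj z a from ⟨haz.symm, Or.inr haB⟩)).le
    have hax : a ≠ x := by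
      intro h; rw [h, hdzx] at hdza; omega
    exact Z t a haB hax (by omega)
  · obtain ⟨y, hy, hdy, hpos⟩ := chain (d-1) (by omega)
    have hd' : d - 1 + 1 = d := by omega
    rw [hd'] at hpos
    have hdy1 : (reduced G B).dist z y = 1 := by omega
    have hyz : G.Adj y z := (SimpleGraph.dist_eq_one_iff_adj.mp hdy1).1.symm
    apply hbdpos d z hz
    · intro a haB haz
      have hdza : (reduced G B).dist z a ≤ 1 :=
        (SimpleGraph.dist_eq_one_iff_adj.mpr (show (reduced G B).Adj z a from ⟨haz.symm, Or.inr haB⟩)).le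
      exact FZ d (by omega) a haB (by omega)
    · exact ⟨y, hy, hyz, hpos⟩
end

section
/- Wavefront lemma (second part): under the assumptions of the wavefront lemma, if instead W(x) = 0 (so W vanishes on the whole interior d_re-ball of radius t0 = d_re(x,z) around z, and W(z) = 0), then u^W(z,t) = 0 for all t ≤ t0. -/
open Finset

variable {V : Type*} [Fintype V] [DecidableEq V]

/-- Wavefront lemma, second part: if the initial value vanishes on the whole interior
ball of radius `t₀ = d_re(x,z)` around `z` (and at `z`), then the wave vanishes at `z`
for all times `t ≤ t₀`. -/
theorem wavefront_zero (G : SimpleGraph V) [DecidableRel G.Adj] (B : Finset V)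
    (μ : V → ℝ) (g : V → V → ℝ) (q : V → ℝ)
    (hμ : ∀ v, 0 < μ v)
    (hgpos : ∀ a b, G.Adj a b → 0 < g a b)
    (hgsymm : ∀ a b, g a b = g b a)
    (hconn : G.Connected)
    (hconnre : (reduced G B).Connected)
    (hadj : ∀ z ∈ B, ∀ a b : V, a ∉ B → b ∉ B → G.Adj a z → G.Adj b z → a ≠ b → G.Adj a b)
    (x z : V) (hx : x ∉ B) (hz : z ∈ B)
    (W : V → ℝ)
    (hWn : ∀ w ∈ B, nder G B μ g W w = 0)
    (hWz : W z = 0)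
    (hWball : ∀ y, y ∉ B → (reduced G B).dist z y ≤ (reduced G B).dist x z → W y = 0)
    (u : V → ℕ → ℝ) (hu : IsWave G B μ g q W u) :
    ∀ t, t ≤ (reduced G B).dist x z → u z t = 0 := by
  classical
  obtain ⟨heq, hneu, hinit, hW0⟩ := hu
  set R := reduced G B with hR
  set t₀ := R.dist x z with ht₀
  -- every boundary vertex with all interior neighbors vanishing (and at least one
  -- interior neighbor) vanishes, by the Neumann condition
  have hbd : ∀ w ∈ B, ∀ t : ℕ, (∃ v, G.Adj v w ∧ v ∉ B) →
      (∀ v, G.Adj v w → v ∉ B → u v t = 0) → u w t = 0 := by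
    intro w hw t hex hv
    obtain ⟨v₀, hv₀a, hv₀b⟩ := hex
    have h := hneu w hw t
    unfold nder at h
    have hμw : (μ w : ℝ)⁻¹ ≠ 0 := inv_ne_zero (hμ w).ne'
    have hsum : ∑ v ∈ univ.filter (fun v => G.Adj v w ∧ v ∉ B),
        g v w * (u v t - u w t) = 0 := by
      rcases mul_eq_zero.mp h with h' | h'
      · exact absurd h' hμw
      · exact h'
    have hrw : ∑ v ∈ univ.filter (fun v => G.Adj v w ∧ v ∉ B),
        g v w * (u v t - u w t)
        = (∑ v ∈ univ.filter (fun v => G.Adj v w ∧ v ∉ B), g v w) * (-(u w t)) := by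
      rw [Finset.sum_mul]
      refine Finset.sum_congr rfl fun v hvmem => ?_
      simp only [Finset.mem_filter, Finset.mem_univ, true_and] at hvmem
      rw [hv v hvmem.1 hvmem.2]; ring
    have hpos : 0 < ∑ v ∈ univ.filter (fun v => G.Adj v w ∧ v ∉ B), g v w := by
      apply Finset.sum_pos
      · intro v hvmem
        simp only [Finset.mem_filter, Finset.mem_univ, true_and] at hvmem
        exact hgpos v w hvmem.1
      · exact ⟨v₀, by simp [hv₀a, hv₀b]⟩
    rw [hrw] at hsum
    have := mul_eq_zero.mp hsum
    rcases this with h' | h'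
    · exact absurd h' hpos.ne'
    · linarith
  -- triangle inequality for reduced distance
  have tri : ∀ a b : V, R.Adj a b → R.dist z b ≤ R.dist z a + 1 := by
    intro a b hab
    have h1 : R.dist a b = 1 := SimpleGraph.dist_eq_one_iff_adj.mpr hab
    have h2 := hconnre.dist_triangle (u := z) (v := a) (w := b)
    omega
  -- key claim: finite speed of propagation
  have key : ∀ t : ℕ, ∀ y, y ∉ B → t + R.dist z y ≤ t₀ + min t 1 → u y t = 0 := by
    intro t
    induction t using Nat.strong_induction_on with
    | _ t ih =>
      match t with
      | 0 =>
        intro y hy hle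
        rw [hW0 y]
        exact hWball y hy (by omega)
      | 1 =>
        intro y hy hle
        rw [hinit y hy, hW0 y]
        exact hWball y hy (by omega)
      | (s+2) =>
        intro y hy hle
        have hy1 : u y (s+1) = 0 := ih (s+1) (by omega) y hy (by omega)
        have hy0 : u y s = 0 := ih s (by omega) y hy (by omega)
        -- all neighbors of y vanish at time s+1
        have hnbr : ∀ w, G.Adj y w → u w (s+1) = 0 := by
          intro w hw
          by_cases hwB : w ∈ B
          · refine hbd w hwB (s+1) ⟨y, hw, hy⟩ ?_
            intro v hv hvB
            have hd : R.dist z v ≤ R.dist z y + 1 := by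
              by_cases hvy : v = y
              · subst hvy; omega
              · exact tri y v ⟨(hadj w hwB v y hvB hy hv hw hvy).symm, Or.inl hy⟩
            exact ih (s+1) (by omega) v hvB (by omega)
          · have hd : R.dist z w ≤ R.dist z y + 1 := tri y w ⟨hw, Or.inl hy⟩
            exact ih (s+1) (by omega) w hwB (by omega)
        have hlap : lap G μ g (fun v => u v (s+1)) y = 0 := by
          unfold lap
          rw [mul_eq_zero]; right
          refine Finset.sum_eq_zero fun w hwmem => ?_
          simp only [Finset.mem_filter, Finset.mem_univ, true_and] at hwmem
          show g y w * (u w (s+1) - u y (s+1)) = 0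
          rw [hnbr w hwmem, hy1]; ring
        have h := heq y hy (s+1) (by omega)
        simp only [show s + 1 + 1 = s + 2 from rfl, Nat.add_sub_cancel] at h
        rw [hlap, hy1, hy0] at h
        linarith
  -- conclude at z
  intro t ht
  match t with
  | 0 => rw [hW0 z]; exact hWz
  | (s+1) =>
    refine hbd z hz (s+1) ?_ ?_
    · -- z has an interior neighbor
      obtain ⟨p⟩ := hconnre.preconnected z x
      cases p with
      | nil => exact absurd hz hx
      | @cons _ w _ h p' =>
        refine ⟨w, h.1.symm, ?_⟩
        rcases h.2 with h' | h'
        · exact absurd hz h'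
        · exact h'
    · intro v hv hvB
      have hd : R.dist z v = 1 :=
        SimpleGraph.dist_eq_one_iff_adj.mpr ⟨hv.symm, Or.inr hvB⟩
      refine key (s+1) v hvB ?_
      omega
end

section
/- If x ∈ G − N(∂G) is an interior vertex not adjacent to the boundary, then any nonzero initial value W in the space W(r_x) = {W : d_nu W|_{∂G} = 0, u^W(z,t) = 0 for all z ∈ ∂G, t < d(x,z)} has support exactly {x}, and moreover the boundary distance function r_x(z) = d(x,z) is a maximal element of the set U of functions s : ∂G → ℤ₊ with 2 ≤ s ≤ |G| and dim W(s) ≠ 0, under the pointwise partial order. -/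
open Finset

variable {V : Type*} [Fintype V] [DecidableEq V]

/-- `W` belongs to the space `𝒲(s)` of initial values whose waves are not observed at
any boundary vertex `z` before time `s(z)`. -/
def InWs (G : SimpleGraph V) [DecidableRel G.Adj] (B : Finset V) (μ : V → ℝ)
    (g : V → V → ℝ) (q : V → ℝ) (s : V → ℕ) (W : V → ℝ) : Prop :=
  (∀ z ∈ B, nder G B μ g W z = 0) ∧
    ∀ u : V → ℕ → ℝ, IsWave G B μ g q W u → ∀ z ∈ B, ∀ t, t < s z → u z t = 0

set_option linter.unusedSectionVars false
set_option linter.unusedVariables false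

section AuxGraph

variable {G : SimpleGraph V} [DecidableRel G.Adj]

lemma aux_adj_dist_le (hconn : G.Connected) {u a b : V} (h : G.Adj a b) :
    G.dist u a ≤ G.dist u b + 1 := by
  have h1 : G.dist b a ≤ 1 := by
    have := SimpleGraph.dist_le (h.symm.toWalk)
    simpa using this
  calc G.dist u a ≤ G.dist u b + G.dist b a := hconn.dist_triangle
    _ ≤ G.dist u b + 1 := by omega

lemma aux_exists_pred (hconn : G.Connected) {u v : V} {k : ℕ} (h : G.dist u v = k + 1) :
    ∃ a, G.Adj a v ∧ G.dist u a = k := by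
  obtain ⟨r, hr⟩ := hconn.exists_walk_length_eq_dist v u
  rw [SimpleGraph.dist_comm, h] at hr
  cases r with
  | nil => simp at hr
  | cons had q =>
    rename_i w
    refine ⟨w, had.symm, ?_⟩
    have h1 : G.dist u w ≤ k := by
      have h2 := SimpleGraph.dist_le q.reverse
      rw [SimpleGraph.Walk.length_reverse] at h2
      simp only [SimpleGraph.Walk.length_cons] at hr
      have h3 : G.dist u w = G.dist w u := SimpleGraph.dist_comm
      omega
    have h2 : G.dist u v ≤ G.dist u w + 1 := aux_adj_dist_le hconn had
    omega

end AuxGraph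

section AuxWave

variable (G : SimpleGraph V) [DecidableRel G.Adj] (B : Finset V) (μ : V → ℝ)
  (g : V → V → ℝ) (q : V → ℝ)

noncomputable def gzs (z : V) : ℝ :=
  ∑ a ∈ univ.filter (fun a => G.Adj a z ∧ a ∉ B), g a z

noncomputable def bavg (f : V → ℝ) (z : V) : ℝ :=
  (gzs G B g z)⁻¹ * ∑ a ∈ univ.filter (fun a => G.Adj a z ∧ a ∉ B), g a z * f a

noncomputable def bext (f : V → ℝ) : V → ℝ :=
  fun y => if y ∈ B then bavg G B g f y else f y

noncomputable def ivals (W : V → ℝ) : ℕ → V → ℝ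
  | 0 => W
  | 1 => W
  | (t+2) => fun y => 2 * ivals W (t+1) y - ivals W t y
      + lap G μ g (bext G B g (ivals W (t+1))) y - q y * ivals W (t+1) y

noncomputable def ucw (W : V → ℝ) (y : V) (t : ℕ) : ℝ :=
  bext G B g (ivals G B μ g q W t) y

variable {G B μ g q}

lemma bext_int {f : V → ℝ} {y : V} (hy : y ∉ B) : bext G B g f y = f y := by
  simp [bext, hy]

lemma bext_bd {f : V → ℝ} {z : V} (hz : z ∈ B) : bext G B g f z = bavg G B g f z := by
  simp [bext, hz]

lemma ivals_one (W : V → ℝ) : ivals G B μ g q W 1 = W := rfl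

lemma ivals_zero (W : V → ℝ) : ivals G B μ g q W 0 = W := rfl

lemma ivals_succ_succ (W : V → ℝ) (t : ℕ) (y : V) :
    ivals G B μ g q W (t+2) y = 2 * ivals G B μ g q W (t+1) y - ivals G B μ g q W t y
      + lap G μ g (bext G B g (ivals G B μ g q W (t+1))) y
      - q y * ivals G B μ g q W (t+1) y := rfl

end AuxWave

section Main

variable {G : SimpleGraph V} [DecidableRel G.Adj] {B : Finset V} {μ : V → ℝ}
  {g : V → V → ℝ} {q : V → ℝ} {x : V}

variable (hμ : ∀ v, 0 < μ v) (hgpos : ∀ a b, G.Adj a b → 0 < g a b)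
  (hconn : G.Connected)
  (hadjB : ∀ z ∈ B, ∀ a b : V, a ∉ B → b ∉ B → G.Adj a z → G.Adj b z → a ≠ b → G.Adj a b)
  (hnoBB : ∀ z ∈ B, ∀ w ∈ B, ¬ G.Adj z w)
  (hx : x ∉ B)

include hnoBB in
lemma nbr_int {z a : V} (hz : z ∈ B) (ha : G.Adj a z) : a ∉ B := by
  intro haB
  exact hnoBB z hz a haB ha.symm

include hconn hnoBB hgpos hx in
lemma gzs_pos {z : V} (hz : z ∈ B) : 0 < gzs G B g z := by
  have hxz : x ≠ z := fun h => hx (h ▸ hz)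
  have hd : 0 < G.dist x z := hconn.pos_dist_of_ne hxz
  obtain ⟨k, hk⟩ : ∃ k, G.dist x z = k + 1 := ⟨G.dist x z - 1, by omega⟩
  obtain ⟨a, haz, -⟩ := aux_exists_pred hconn hk
  apply Finset.sum_pos
  · intro i hi
    simp only [mem_filter] at hi
    exact hgpos i z hi.2.1
  · exact ⟨a, by simp [haz, nbr_int hnoBB hz haz]⟩

include hconn hnoBB hgpos hx hμ in
lemma bd_solve {z : V} (hz : z ∈ B) {f : V → ℝ} (hf : nder G B μ g f z = 0) :
    f z = bavg G B g f z := by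
  have hgz := gzs_pos hgpos hconn hnoBB hx hz
  have hμz := hμ z
  unfold nder at hf
  rw [mul_eq_zero] at hf
  rcases hf with hf | hf
  · exact absurd hf (by positivity)
  · have hsum : ∀ a ∈ univ.filter (fun a => G.Adj a z ∧ a ∉ B),
        g a z * (f a - f z) = g a z * f a - g a z * f z := fun a _ => by ring
    rw [Finset.sum_congr rfl hsum, Finset.sum_sub_distrib, sub_eq_zero] at hf
    rw [bavg, hf, ← Finset.sum_mul]
    have : (∑ a ∈ univ.filter (fun a => G.Adj a z ∧ a ∉ B), g a z) = gzs G B g z := rfl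
    rw [this, ← mul_assoc, inv_mul_cancel₀ (ne_of_gt hgz), one_mul]

lemma bavg_congr {z : V} {f f' : V → ℝ}
    (h : ∀ a, G.Adj a z → a ∉ B → f a = f' a) : bavg G B g f z = bavg G B g f' z := by
  unfold bavg
  congr 1
  apply Finset.sum_congr rfl
  intro a ha
  simp only [mem_filter] at ha
  rw [h a ha.2.1 ha.2.2]

include hconn hnoBB hgpos hx in
lemma nder_bext_zero {z : V} (hz : z ∈ B) (f : V → ℝ) :
    nder G B μ g (bext G B g f) z = 0 := by
  have hgz := gzs_pos hgpos hconn hnoBB hx hz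
  unfold nder
  rw [mul_eq_zero]; right
  have hsum : ∀ a ∈ univ.filter (fun a => G.Adj a z ∧ a ∉ B),
      g a z * (bext G B g f a - bext G B g f z)
        = g a z * f a - g a z * bavg G B g f z := by
    intro a ha
    simp only [mem_filter] at ha
    rw [bext_int ha.2.2, bext_bd hz]
    ring
  rw [Finset.sum_congr rfl hsum, Finset.sum_sub_distrib, ← Finset.sum_mul]
  have : (∑ a ∈ univ.filter (fun a => G.Adj a z ∧ a ∉ B), g a z) = gzs G B g z := rfl
  rw [this, bavg, ← mul_assoc, mul_inv_cancel₀ (ne_of_gt hgz), one_mul, sub_self]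

include hconn hnoBB hgpos hx hμ in
lemma isWave_ucw {W : V → ℝ} (hW : ∀ z ∈ B, nder G B μ g W z = 0) :
    IsWave G B μ g q W (ucw G B μ g q W) := by
  refine ⟨?_, ?_, ?_, ?_⟩
  · intro y hy t ht
    obtain ⟨t', rfl⟩ : ∃ t', t = t' + 1 := ⟨t - 1, by omega⟩
    have hfun : (fun v => ucw G B μ g q W v (t'+1)) = bext G B g (ivals G B μ g q W (t'+1)) := rfl
    show (ucw G B μ g q W y (t'+2) - 2 * ucw G B μ g q W y (t'+1) + ucw G B μ g q W y (t'+1-1))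
      - lap G μ g (fun v => ucw G B μ g q W v (t'+1)) y + q y * ucw G B μ g q W y (t'+1) = 0
    have h2 : t' + 1 - 1 = t' := by omega
    rw [h2, hfun]
    unfold ucw
    rw [bext_int hy, bext_int hy, bext_int hy, ivals_succ_succ]
    ring
  · intro z hz t
    exact nder_bext_zero hgpos hconn hnoBB hx hz _
  · intro y _
    rfl
  · intro y
    unfold ucw
    by_cases hy : y ∈ B
    · rw [bext_bd hy, ivals_zero]
      exact (bd_solve hμ hgpos hconn hnoBB hx hy (hW y hy)).symm
    · rw [bext_int hy, ivals_zero]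

include hconn hnoBB hgpos hx hμ in
lemma wave_unique {W : V → ℝ} {u : V → ℕ → ℝ} (hu : IsWave G B μ g q W u) :
    ∀ t y, u y t = ucw G B μ g q W y t := by
  obtain ⟨heq, hneu, hsym, hini⟩ := hu
  have bdstep : ∀ t, ∀ z ∈ B, (∀ a, G.Adj a z → a ∉ B → u a t = ivals G B μ g q W t a) →
      u z t = ucw G B μ g q W z t := by
    intro t z hz hint
    have h1 : u z t = bavg G B g (fun v => u v t) z :=
      bd_solve hμ hgpos hconn hnoBB hx hz (hneu z hz t)
    rw [h1, ucw, bext_bd hz]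
    exact bavg_congr (fun a ha haB => hint a ha haB)
  have key : ∀ t, (∀ y, u y t = ucw G B μ g q W y t) ∧
      (∀ y, u y (t+1) = ucw G B μ g q W y (t+1)) := by
    intro t
    induction t with
    | zero =>
      have h0 : ∀ y, y ∉ B → u y 0 = ucw G B μ g q W y 0 := by
        intro y hy; rw [hini y, ucw, bext_int hy, ivals_zero]
      have h0' : ∀ y, u y 0 = ucw G B μ g q W y 0 := by
        intro y
        by_cases hy : y ∈ B
        · exact bdstep 0 y hy (fun a _ haB => by rw [hini a]; rfl)
        · exact h0 y hy
      have h1' : ∀ y, u y 1 = ucw G B μ g q W y 1 := by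
        intro y
        by_cases hy : y ∈ B
        · refine bdstep 1 y hy (fun a ha haB => ?_)
          rw [hsym a haB, hini a, ivals_one]
        · rw [hsym y hy, hini y, ucw, bext_int hy, ivals_one]
      exact ⟨h0', h1'⟩
    | succ t ih =>
      refine ⟨ih.2, ?_⟩
      have hint : ∀ y, y ∉ B → u y (t+2) = ivals G B μ g q W (t+2) y := by
        intro y hy
        have he := heq y hy (t+1) (by omega)
        have hfun : (fun v => u v (t+1)) = bext G B g (ivals G B μ g q W (t+1)) := by
          funext v; rw [ih.2 v]; rfl
        rw [hfun] at he
        have h2 : t + 1 - 1 = t := by omega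
        rw [h2] at he
        have ht0 := ih.1 y
        have ht1 := ih.2 y
        rw [ucw, bext_int hy] at ht0 ht1
        rw [ivals_succ_succ]
        rw [ht0, ht1] at he
        linarith
      intro y
      by_cases hy : y ∈ B
      · exact bdstep (t+2) y hy (fun a ha haB => hint a haB)
      · rw [ucw, bext_int hy]; exact hint y hy
  exact fun t => (key t).1

lemma bavg_lin (c : ℝ) (f h : V → ℝ) (z : V) :
    bavg G B g (fun v => c * f v + h v) z = c * bavg G B g f z + bavg G B g h z := by
  unfold bavg
  have hs : ∀ a ∈ univ.filter (fun a => G.Adj a z ∧ a ∉ B),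
      g a z * (c * f a + h a) = c * (g a z * f a) + g a z * h a := fun a _ => by ring
  rw [Finset.sum_congr rfl hs, Finset.sum_add_distrib, ← Finset.mul_sum]
  ring

lemma bext_lin (c : ℝ) (f h : V → ℝ) :
    bext G B g (fun v => c * f v + h v) = fun y => c * bext G B g f y + bext G B g h y := by
  funext y
  by_cases hy : y ∈ B
  · rw [bext_bd hy, bext_bd hy, bext_bd hy, bavg_lin]
  · rw [bext_int hy, bext_int hy, bext_int hy]

lemma lap_lin (c : ℝ) (f h : V → ℝ) (y : V) :
    lap G μ g (fun v => c * f v + h v) y = c * lap G μ g f y + lap G μ g h y := by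
  unfold lap
  have hs : ∀ a ∈ univ.filter (fun a => G.Adj y a),
      g y a * ((c * f a + h a) - (c * f y + h y))
        = c * (g y a * (f a - f y)) + g y a * (h a - h y) := fun a _ => by ring
  rw [Finset.sum_congr rfl hs, Finset.sum_add_distrib, ← Finset.mul_sum]
  ring

lemma ivals_lin (c : ℝ) (f h : V → ℝ) :
    ∀ t y, ivals G B μ g q (fun v => c * f v + h v) t y
      = c * ivals G B μ g q f t y + ivals G B μ g q h t y := by
  have key : ∀ t, (∀ y, ivals G B μ g q (fun v => c * f v + h v) t y
      = c * ivals G B μ g q f t y + ivals G B μ g q h t y) ∧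
      (∀ y, ivals G B μ g q (fun v => c * f v + h v) (t+1) y
      = c * ivals G B μ g q f (t+1) y + ivals G B μ g q h (t+1) y) := by
    intro t
    induction t with
    | zero => exact ⟨fun y => rfl, fun y => rfl⟩
    | succ t ih =>
      refine ⟨ih.2, fun y => ?_⟩
      have hfun : ivals G B μ g q (fun v => c * f v + h v) (t+1)
          = fun v => c * ivals G B μ g q f (t+1) v + ivals G B μ g q h (t+1) v := by
        funext v; exact ih.2 v
      rw [ivals_succ_succ, ivals_succ_succ, ivals_succ_succ, hfun, ih.1 y, bext_lin, lap_lin]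
      beta_reduce
      ring
  exact fun t => (key t).1

lemma ucw_lin (c : ℝ) (f h : V → ℝ) (z : V) (t : ℕ) :
    ucw G B μ g q (fun v => c * f v + h v) z t
      = c * ucw G B μ g q f z t + ucw G B μ g q h z t := by
  unfold ucw
  have hfun : ivals G B μ g q (fun v => c * f v + h v) t
      = fun v => c * ivals G B μ g q f t v + ivals G B μ g q h t v := by
    funext v; exact ivals_lin c f h t v
  rw [hfun, bext_lin]

include hconn hadjB hnoBB in
lemma FS_int (S : Finset V) {W : V → ℝ}
    (hsupp : ∀ v, W v ≠ 0 → v ∈ S) :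
    ∀ t y, y ∉ B → (∀ s ∈ S, max t 1 ≤ G.dist s y) → ivals G B μ g q W t y = 0 := by
  have base : ∀ y, y ∉ B → (∀ s ∈ S, 1 ≤ G.dist s y) → W y = 0 := by
    intro y _ hd
    by_contra hW
    have hy : y ∈ S := hsupp y hW
    have := hd y hy
    simp [SimpleGraph.dist_self] at this
  have key : ∀ t, (∀ y, y ∉ B → (∀ s ∈ S, max t 1 ≤ G.dist s y) → ivals G B μ g q W t y = 0) ∧
      (∀ y, y ∉ B → (∀ s ∈ S, max (t+1) 1 ≤ G.dist s y) → ivals G B μ g q W (t+1) y = 0) := by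
    intro t
    induction t with
    | zero =>
      constructor
      · intro y hy hd
        exact base y hy (fun s hs => le_trans (by omega) (hd s hs))
      · intro y hy hd
        exact base y hy (fun s hs => le_trans (by omega) (hd s hs))
    | succ t ih =>
      refine ⟨ih.2, fun y hy hd => ?_⟩
      have hdy : ∀ s ∈ S, t + 2 ≤ G.dist s y := by
        intro s hs; have := hd s hs; omega
      have hA : ivals G B μ g q W (t+1) y = 0 :=
        ih.2 y hy (fun s hs => le_trans (by omega) (hdy s hs))
      have hB : ivals G B μ g q W t y = 0 :=
        ih.1 y hy (fun s hs => le_trans (by omega) (hdy s hs))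
      -- neighbors of y have value zero at time t+1 under bext
      have hnbr : ∀ a, G.Adj y a → bext G B g (ivals G B μ g q W (t+1)) a = 0 := by
        intro a hya
        by_cases haB : a ∈ B
        · rw [bext_bd haB]
          unfold bavg
          rw [mul_eq_zero]; right
          apply Finset.sum_eq_zero
          intro b hb
          simp only [mem_filter] at hb
          obtain ⟨-, hba, hbB⟩ := hb
          have hbz : ivals G B μ g q W (t+1) b = 0 := by
            by_cases hby : b = y
            · subst hby; exact hA
            · have hadjby : G.Adj b y := hadjB a haB b y hbB hy hba hya hby
              refine ih.2 b hbB (fun s hs => ?_)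
              have h1 : G.dist s y ≤ G.dist s b + 1 := aux_adj_dist_le hconn hadjby.symm
              have := hdy s hs
              omega
          rw [hbz, mul_zero]
        · rw [bext_int haB]
          refine ih.2 a haB (fun s hs => ?_)
          have h1 : G.dist s y ≤ G.dist s a + 1 := aux_adj_dist_le hconn hya
          have := hdy s hs
          omega
      have hlap : lap G μ g (bext G B g (ivals G B μ g q W (t+1))) y = 0 := by
        unfold lap
        rw [mul_eq_zero]; right
        apply Finset.sum_eq_zero
        intro a ha
        simp only [mem_filter] at ha
        rw [hnbr a ha.2, bext_int hy, hA]
        ring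
      rw [ivals_succ_succ, hA, hB, hlap]
      ring
  exact fun t => (key t).1

include hconn hadjB hnoBB in
lemma FS_bd (S : Finset V) {W : V → ℝ}
    (hsupp : ∀ v, W v ≠ 0 → v ∈ S) {z : V} (hz : z ∈ B) (t : ℕ)
    (hd : ∀ s ∈ S, t + 2 ≤ G.dist s z) :
    ucw G B μ g q W z (t+1) = 0 := by
  rw [ucw, bext_bd hz]
  unfold bavg
  rw [mul_eq_zero]; right
  apply Finset.sum_eq_zero
  intro a ha
  simp only [mem_filter] at ha
  have h0 : ivals G B μ g q W (t+1) a = 0 := by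
    refine FS_int hconn hadjB hnoBB S hsupp (t+1) a ha.2.2 (fun s hs => ?_)
    have h1 : G.dist s z ≤ G.dist s a + 1 := aux_adj_dist_le hconn ha.2.1.symm
    have := hd s hs
    omega
  rw [h0, mul_zero]

include hconn hadjB hnoBB in
lemma bd_nbr_dist {y₀ y z : V} (hy₀ : y₀ ∉ B) (hy : y ∉ B) (hz : z ∈ B)
    (hyz : G.Adj y z) : G.dist y₀ y ≤ G.dist y₀ z := by
  rcases Nat.eq_zero_or_pos (G.dist y₀ z) with h0 | hpos
  · exact absurd (hconn.dist_eq_zero_iff.mp h0) (fun h => hy₀ (h ▸ hz))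
  · obtain ⟨k, hk⟩ : ∃ k, G.dist y₀ z = k + 1 := ⟨G.dist y₀ z - 1, by omega⟩
    obtain ⟨a, haz, hda⟩ := aux_exists_pred hconn hk
    have haB : a ∉ B := nbr_int hnoBB hz haz
    by_cases hay : a = y
    · subst hay; omega
    · have : G.Adj a y := hadjB z hz a y haB hy haz hyz hay
      have := aux_adj_dist_le hconn (u := y₀) this.symm
      omega

include hμ hgpos hconn hadjB hnoBB in
lemma first_arrival {y₀ : V} (hy₀ : y₀ ∉ B) (k : ℕ) :
    (∀ z ∈ B, G.dist y₀ z = k →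
        0 < ucw G B μ g q (fun v => if v = y₀ then (1:ℝ) else 0) z k) ∧
    (∀ y, y ∉ B → G.dist y₀ y = k →
        0 < ivals G B μ g q (fun v => if v = y₀ then (1:ℝ) else 0) (k+1) y) := by
  set δ : V → ℝ := fun v => if v = y₀ then (1:ℝ) else 0 with hδ
  have hsupp : ∀ v, δ v ≠ 0 → v ∈ ({y₀} : Finset V) := by
    intro v hv
    simp only [hδ] at hv
    by_cases h : v = y₀ <;> simp [h] at hv ⊢
  have hFS : ∀ t y, y ∉ B → max t 1 ≤ G.dist y₀ y → ivals G B μ g q δ t y = 0 := by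
    intro t y hy hd
    exact FS_int hconn hadjB hnoBB {y₀} hsupp t y hy (fun s hs => by
      simp only [Finset.mem_singleton] at hs; subst hs; exact hd)
  induction k using Nat.strong_induction_on with
  | _ k ih =>
    rcases Nat.eq_zero_or_pos k with rfl | hkpos
    · constructor
      · intro z hz hdz
        exact absurd (hconn.dist_eq_zero_iff.mp hdz) (fun h => hy₀ (h ▸ hz))
      · intro y hy hdy
        have : y₀ = y := hconn.dist_eq_zero_iff.mp hdy
        subst this
        show 0 < ivals G B μ g q δ 1 y₀
        rw [ivals_one]
        simp [hδ]
    · obtain ⟨k', rfl⟩ : ∃ k', k = k' + 1 := ⟨k - 1, by omega⟩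
      have hbd : ∀ z ∈ B, G.dist y₀ z = k' + 1 → 0 < ucw G B μ g q δ z (k'+1) := by
        intro z hz hdz
        rw [ucw, bext_bd hz]
        have hgz := gzs_pos hgpos hconn hnoBB hy₀ hz
        unfold bavg
        apply mul_pos (by positivity)
        apply Finset.sum_pos'
        · intro a ha
          simp only [mem_filter] at ha
          obtain ⟨-, haz, haB⟩ := ha
          by_cases hda : G.dist y₀ a = k'
          · exact le_of_lt (mul_pos (hgpos a z haz) ((ih k' (by omega)).2 a haB hda))
          · have hge : k' + 1 ≤ G.dist y₀ a := by
              have := aux_adj_dist_le hconn (u := y₀) haz.symm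
              rw [hdz] at this
              omega
            rw [hFS (k'+1) a haB (by omega), mul_zero]
        · obtain ⟨a, haz, hda⟩ := aux_exists_pred hconn hdz
          have haB : a ∉ B := nbr_int hnoBB hz haz
          refine ⟨a, by simp [haz, haB], ?_⟩
          exact mul_pos (hgpos a z haz) ((ih k' (by omega)).2 a haB hda)
      refine ⟨hbd, ?_⟩
      intro y hy hdy
      have h1 : ivals G B μ g q δ (k'+1) y = 0 := hFS (k'+1) y hy (by omega)
      have h2 : ivals G B μ g q δ k' y = 0 := hFS k' y hy (by omega)
      rw [ivals_succ_succ, h1, h2]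
      have hlap : 0 < lap G μ g (bext G B g (ivals G B μ g q δ (k'+1))) y := by
        unfold lap
        apply mul_pos (by have := hμ y; positivity)
        apply Finset.sum_pos'
        · intro a ha
          simp only [mem_filter] at ha
          rw [bext_int hy, h1, sub_zero]
          by_cases haB : a ∈ B
          · have hbge : G.dist y₀ y ≤ G.dist y₀ a := bd_nbr_dist hconn hadjB hnoBB hy₀ hy haB ha.2
            by_cases hda : G.dist y₀ a = k' + 1
            · have := hbd a haB hda
              rw [ucw, bext_bd haB] at this
              rw [bext_bd haB]
              exact le_of_lt (mul_pos (hgpos y a ha.2) this)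
            · have hge : k' + 3 ≤ G.dist y₀ a + 1 := by omega
              have : ucw G B μ g q δ a (k'+1) = 0 := by
                refine FS_bd hconn hadjB hnoBB {y₀} hsupp haB k' (fun s hs => ?_)
                simp only [Finset.mem_singleton] at hs; subst hs
                omega
              rw [ucw, bext_bd haB] at this
              rw [bext_bd haB, this, mul_zero]
          · rw [bext_int haB]
            by_cases hda : G.dist y₀ a = k'
            · exact le_of_lt (mul_pos (hgpos y a ha.2) ((ih k' (by omega)).2 a haB hda))
            · have hge : k' + 1 ≤ G.dist y₀ a := by
                have := aux_adj_dist_le hconn (u := y₀) ha.2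
                omega
              rw [hFS (k'+1) a haB (by omega), mul_zero]
        · obtain ⟨w, hwy, hdw⟩ := aux_exists_pred hconn hdy
          have hwB : w ∉ B := by
            intro hwB
            have := bd_nbr_dist hconn hadjB hnoBB hy₀ hy hwB hwy.symm
            omega
          refine ⟨w, by simp [hwy.symm, hwB], ?_⟩
          rw [bext_int hy, bext_int hwB, h1, sub_zero]
          exact mul_pos (hgpos y w hwy.symm) ((ih k' (by omega)).2 w hwB hdw)
      linarith

include hμ hgpos hconn hadjB hnoBB in
lemma main_arrival {W : V → ℝ} (hWB : ∀ v, W v ≠ 0 → v ∉ B) {y₀ : V} (hy₀ : y₀ ∉ B)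
    (hW0 : W y₀ ≠ 0) {z : V} (hz : z ∈ B)
    (hmin : ∀ v, W v ≠ 0 → v ≠ y₀ → G.dist y₀ z < G.dist v z) :
    ucw G B μ g q W z (G.dist y₀ z) ≠ 0 := by
  classical
  set δ : V → ℝ := fun v => if v = y₀ then (1:ℝ) else 0 with hδ
  set W' : V → ℝ := fun v => W v - W y₀ * δ v with hW'
  have hWdec : W = fun v => W y₀ * δ v + W' v := by
    funext v; simp only [hδ, hW']; ring
  have hm : 0 < G.dist y₀ z := hconn.pos_dist_of_ne (fun h => hy₀ (h ▸ hz))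
  obtain ⟨m', hm'⟩ : ∃ m', G.dist y₀ z = m' + 1 := ⟨G.dist y₀ z - 1, by omega⟩
  have hW'supp : ∀ v, W' v ≠ 0 → v ∈ univ.filter (fun v => W v ≠ 0 ∧ v ≠ y₀) := by
    intro v hv
    simp only [mem_filter, mem_univ, true_and]
    by_cases hvy : v = y₀
    · subst hvy; simp [hW', hδ] at hv
    · refine ⟨?_, hvy⟩
      intro hWv
      apply hv
      simp [hW', hδ, hvy, hWv]
  have hzero : ucw G B μ g q W' z (m' + 1) = 0 := by
    refine FS_bd hconn hadjB hnoBB _ hW'supp hz m' (fun v hv => ?_)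
    simp only [mem_filter, mem_univ, true_and] at hv
    have := hmin v hv.1 hv.2
    have h1 : G.dist v z = G.dist z v := SimpleGraph.dist_comm
    omega
  have hpos : 0 < ucw G B μ g q δ z (m' + 1) :=
    (first_arrival hμ hgpos hconn hadjB hnoBB hy₀ (m'+1)).1 z hz hm'
  rw [hm', hWdec, ucw_lin, hzero, add_zero]
  exact mul_ne_zero hW0 (ne_of_gt hpos)

include hconn hadjB hnoBB in
lemma interior_chain (hxB : x ∉ B) :
    ∀ k : ℕ, ∀ v, v ∉ B → G.dist x v = k → ∀ i, i ≤ k → ∃ w, w ∉ B ∧ G.dist x w = i := by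
  intro k
  induction k with
  | zero =>
    intro v hv hdv i hi
    exact ⟨v, hv, by omega⟩
  | succ k ihk =>
    intro v hv hdv i hi
    rcases Nat.eq_or_lt_of_le hi with rfl | hlt
    · exact ⟨v, hv, hdv⟩
    · obtain ⟨w, hwv, hdw⟩ := aux_exists_pred hconn hdv
      have hwB : w ∉ B := by
        intro hwB
        have := bd_nbr_dist hconn hadjB hnoBB hxB hv hwB hwv.symm
        omega
      exact ihk w hwB hdw i (by omega)

include hconn hadjB hnoBB in
lemma dist_le_card (hxB : x ∉ B) {z : V} (hz : z ∈ B) :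
    G.dist x z ≤ (Bᶜ : Finset V).card := by
  classical
  rcases Nat.eq_zero_or_pos (G.dist x z) with h0 | hpos
  · omega
  · obtain ⟨m', hm'⟩ : ∃ m', G.dist x z = m' + 1 := ⟨G.dist x z - 1, by omega⟩
    obtain ⟨a, haz, hda⟩ := aux_exists_pred hconn hm'
    have haB : a ∉ B := nbr_int hnoBB hz haz
    have hchain := interior_chain hconn hadjB hnoBB hxB m' a haB hda
    have hch : ∀ i : ℕ, i < m' + 1 → ∃ w, w ∉ B ∧ G.dist x w = i := fun i hi =>
      hchain i (by omega)
    choose f hf1 hf2 using hch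
    have hcard : (Finset.range (m'+1)).card ≤ (Bᶜ : Finset V).card := by
      apply Finset.card_le_card_of_injOn (fun i => if h : i < m' + 1 then f i h else x)
      · intro i hi
        simp only [Finset.mem_coe, Finset.mem_range] at hi
        simp [hi, Finset.mem_compl, hf1 i hi]
      · intro i hi j hj hij
        simp only [Finset.coe_range, Set.mem_Iio] at hi hj
        simp only [dif_pos hi, dif_pos hj] at hij
        have h1 := hf2 i hi
        have h2 := hf2 j hj
        rw [hij] at h1
        omega
    simpa [hm'] using hcard

include hconn in
lemma aux_dist_lt_of_edist_lt {u a b : V} (h : G.edist u a < G.edist u b) :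
    G.dist u a < G.dist u b := by
  have ha : G.edist u a ≠ ⊤ := SimpleGraph.edist_ne_top_iff_reachable.mpr (hconn u a)
  have hb : G.edist u b ≠ ⊤ := SimpleGraph.edist_ne_top_iff_reachable.mpr (hconn u b)
  rw [← ENat.coe_toNat ha, ← ENat.coe_toNat hb] at h
  exact_mod_cast h

end Main

/-- For an interior vertex `x` not adjacent to the boundary, any nonzero initial value in
`𝒲(r_x)` is supported exactly at `x`, and the boundary distance function `r_x` is a
maximal element of the set `𝒰`. -/
theorem boundary_distance_maximal (G : SimpleGraph V) [DecidableRel G.Adj] (B : Finset V)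
    (μ : V → ℝ) (g : V → V → ℝ) (q : V → ℝ)
    (hμ : ∀ v, 0 < μ v)
    (hgpos : ∀ a b, G.Adj a b → 0 < g a b)
    (hgsymm : ∀ a b, g a b = g b a)
    (hconn : G.Connected)
    (hTP : TwoPoints G B)
    (hadj : ∀ z ∈ B, ∀ a b : V, a ∉ B → b ∉ B → G.Adj a z → G.Adj b z → a ≠ b → G.Adj a b)
    (hnoBB : ∀ z ∈ B, ∀ w ∈ B, ¬ G.Adj z w)
    (x : V) (hx : x ∉ B) (hxfar : ∀ z ∈ B, ¬ G.Adj x z) :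
    (∀ W : V → ℝ, W ≠ 0 → InWs G B μ g q (fun z => G.dist x z) W →
        ∀ y, W y ≠ 0 ↔ y = x) ∧
    ((∀ z ∈ B, 2 ≤ G.dist x z ∧ G.dist x z ≤ (Bᶜ : Finset V).card) ∧
      ∃ W : V → ℝ, W ≠ 0 ∧ InWs G B μ g q (fun z => G.dist x z) W) ∧
    (∀ s : V → ℕ,
      ((∀ z ∈ B, 2 ≤ s z ∧ s z ≤ (Bᶜ : Finset V).card) ∧
        ∃ W : V → ℝ, W ≠ 0 ∧ InWs G B μ g q s W) →
      (∀ z ∈ B, G.dist x z ≤ s z) → ∀ z ∈ B, s z = G.dist x z) := by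
  classical
  -- Part 1 : support of a nonzero W ∈ 𝒲(r_x) is exactly {x}
  have part1 : ∀ W : V → ℝ, W ≠ 0 → InWs G B μ g q (fun z => G.dist x z) W →
      ∀ y, W y ≠ 0 ↔ y = x := by
    intro W hWne hWs
    obtain ⟨hnd, hobs⟩ := hWs
    have hwave : IsWave G B μ g q W (ucw G B μ g q W) :=
      isWave_ucw hμ hgpos hconn hnoBB hx hnd
    have hobs' : ∀ z ∈ B, ∀ t, t < G.dist x z → ucw G B μ g q W z t = 0 :=
      hobs _ hwave
    have hWB : ∀ v, W v ≠ 0 → v ∉ B := by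
      intro v hv hvB
      have hdx : 0 < G.dist x v := hconn.pos_dist_of_ne (fun h => hx (h ▸ hvB))
      have h0 : ucw G B μ g q W v 0 = 0 := hobs' v hvB 0 hdx
      have h1 : ucw G B μ g q W v 0 = W v := hwave.2.2.2 v
      exact hv (h1 ▸ h0)
    have hsup : ∀ y, W y ≠ 0 → y = x := by
      by_contra hcon
      push_neg at hcon
      obtain ⟨ys, hysW, hysx⟩ := hcon
      set T : Finset V := insert x (univ.filter (fun v => W v ≠ 0)) with hT
      have hTB : ∀ v ∈ T, v ∉ B := by
        intro v hv
        rcases Finset.mem_insert.mp hv with rfl | hv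
        · exact hx
        · exact hWB v (by simpa using hv)
      have hysT : ys ∈ T := Finset.mem_insert_of_mem (by simpa using hysW)
      have hxT : x ∈ T := Finset.mem_insert_self _ _
      have hcard : 2 ≤ T.card := by
        rw [Nat.succ_le_iff]
        exact Finset.one_lt_card.mpr ⟨x, hxT, ys, hysT, fun h => hysx h.symm⟩
      obtain ⟨x₀, x₁, hne01, he₀, he₁⟩ := hTP T hTB hcard
      have main : ∀ p, ExtremePt G B T p → p ≠ x → False := by
        intro p hp hpx
        obtain ⟨hpT, z, hzB, hzmin⟩ := hp
        have hpB : p ∉ B := hTB p hpT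
        have hpW : W p ≠ 0 := by
          rcases Finset.mem_insert.mp hpT with rfl | h
          · exact absurd rfl hpx
          · simpa using h
        have hdist : ∀ y ∈ T, y ≠ p → G.dist z p < G.dist z y := fun y hy hyp =>
          aux_dist_lt_of_edist_lt hconn (hzmin y hy hyp)
        have harr : ucw G B μ g q W z (G.dist p z) ≠ 0 := by
          refine main_arrival hμ hgpos hconn hadj hnoBB hWB hpB hpW hzB ?_
          intro v hv hvp
          have hvT : v ∈ T := Finset.mem_insert_of_mem (by simpa using hv)
          have h1 := hdist v hvT hvp
          have h2 : G.dist z p = G.dist p z := SimpleGraph.dist_comm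
          have h3 : G.dist z v = G.dist v z := SimpleGraph.dist_comm
          omega
        have hge : G.dist x z ≤ G.dist p z := by
          by_contra h
          push_neg at h
          exact harr (hobs' z hzB _ h)
        have h4 := hdist x hxT (Ne.symm hpx)
        have h5 : G.dist z p = G.dist p z := SimpleGraph.dist_comm
        have h6 : G.dist z x = G.dist x z := SimpleGraph.dist_comm
        omega
      rcases eq_or_ne x₀ x with rfl | h₀
      · exact main x₁ he₁ (fun h => hne01 h.symm)
      · exact main x₀ he₀ h₀
    refine fun y => ⟨hsup y, ?_⟩
    rintro rfl
    intro hWx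
    apply hWne
    funext v
    by_cases h : W v = 0
    · exact h
    · exact absurd ((hsup v h) ▸ h) (by simpa using hWx)
  refine ⟨part1, ⟨?_, ?_⟩, ?_⟩
  · -- bounds on r_x
    intro z hz
    constructor
    · have h0 : G.dist x z ≠ 0 :=
        Nat.pos_iff_ne_zero.mp (hconn.pos_dist_of_ne (fun h => hx (h ▸ hz)))
      have h1 : G.dist x z ≠ 1 := fun h =>
        hxfar z hz (SimpleGraph.dist_eq_one_iff_adj.mp h)
      omega
    · exact dist_le_card hconn hadj hnoBB hx hz
  · -- existence : W = δ_x
    refine ⟨fun v => if v = x then (1:ℝ) else 0, ?_, ?_, ?_⟩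
    · intro h
      have := congrFun h x
      simp at this
    · intro z hz
      unfold nder
      rw [mul_eq_zero]; right
      apply Finset.sum_eq_zero
      intro a ha
      simp only [mem_filter] at ha
      have hax : a ≠ x := fun h => hxfar z hz (h ▸ ha.2.1)
      have hzx : z ≠ x := fun h => hx (h ▸ hz)
      simp [hax, hzx]
    · intro u hu z hz t ht
      have huq := wave_unique hμ hgpos hconn hnoBB hx hu
      rw [huq t z]
      rcases Nat.eq_zero_or_pos t with rfl | hpos
      · rw [← huq 0 z, hu.2.2.2 z]
        have hzx : z ≠ x := fun h => hx (h ▸ hz)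
        simp [hzx]
      · obtain ⟨t', rfl⟩ : ∃ t', t = t' + 1 := ⟨t - 1, by omega⟩
        refine FS_bd hconn hadj hnoBB {x} ?_ hz t' ?_
        · intro v hv
          by_cases h : v = x <;> simp [h] at hv ⊢
        · intro w hw
          simp only [Finset.mem_singleton] at hw
          rw [hw]
          have ht' : t' + 1 < G.dist x z := ht
          omega
  · -- maximality
    rintro s ⟨hsb, W, hWne, hWs⟩ hge z hz
    have hWrx : InWs G B μ g q (fun z => G.dist x z) W :=
      ⟨hWs.1, fun u hu z' hz' t ht => hWs.2 u hu z' hz' t (lt_of_lt_of_le ht (hge z' hz'))⟩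
    have hchar := part1 W hWne hWrx
    have hWx : W x ≠ 0 := (hchar x).mpr rfl
    have hWB : ∀ v, W v ≠ 0 → v ∉ B := by
      intro v hv
      rw [(hchar v).mp hv]
      exact hx
    have harr : ucw G B μ g q W z (G.dist x z) ≠ 0 := by
      refine main_arrival hμ hgpos hconn hadj hnoBB hWB hx hWx hz ?_
      intro v hv hvx
      exact absurd ((hchar v).mp hv) hvx
    have hwave : IsWave G B μ g q W (ucw G B μ g q W) :=
      isWave_ucw hμ hgpos hconn hnoBB hx hWs.1
    have hle : s z ≤ G.dist x z := by
      by_contra h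
      push_neg at h
      exact harr (hWs.2 _ hwave z hz _ h)
    exact le_antisymm hle (hge z hz)
end

section
/- Positivity at extreme points: let W be an initial value with d_nu W|_{∂G} = 0 such that for every boundary vertex z the first nonzero value u^W(z, t^W_z) of the wave at z is positive. If x0 is an extreme point of supp(W) ∩ G with respect to ∂G, then W(x0) > 0. -/
open Finset

variable {V : Type*} [Fintype V] [DecidableEq V]

def igraph (G : SimpleGraph V) (B : Finset V) : SimpleGraph V where
  Adj a b := G.Adj a b ∧ a ∉ B ∧ b ∉ B
  symm := ⟨fun _ _ h => ⟨h.1.symm, h.2.2, h.2.1⟩⟩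
  loopless := ⟨fun a h => G.loopless.irrefl a h.1⟩

instance (G : SimpleGraph V) [DecidableRel G.Adj] (B : Finset V) :
    DecidableRel (igraph G B).Adj := fun a b => instDecidableAnd

def NintF (G : SimpleGraph V) [DecidableRel G.Adj] (B : Finset V) (z : V) : Finset V :=
  univ.filter (fun p => G.Adj p z ∧ p ∉ B)

noncomputable def bfill (G : SimpleGraph V) [DecidableRel G.Adj] (B : Finset V)
    (g : V → V → ℝ) (v : V → ℝ) : V → ℝ := fun x =>
  if x ∈ B then (∑ p ∈ NintF G B x, g p x * v p) / (∑ p ∈ NintF G B x, g p x)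
  else v x

noncomputable def wv (G : SimpleGraph V) [DecidableRel G.Adj] (B : Finset V)
    (μ : V → ℝ) (g : V → V → ℝ) (q : V → ℝ) (W : V → ℝ) : ℕ → V → ℝ
  | 0 => W
  | 1 => bfill G B g W
  | (t+2) => bfill G B g (fun x => 2 * wv G B μ g q W (t+1) x - wv G B μ g q W t x
      + lap G μ g (wv G B μ g q W (t+1)) x - q x * wv G B μ g q W (t+1) x)

open Classical in
noncomputable def Ssup (B : Finset V) (W : V → ℝ) : Finset V :=
  univ.filter (fun s => s ∉ B ∧ W s ≠ 0)

noncomputable def Dd (G : SimpleGraph V) (B : Finset V) (W : V → ℝ) (x : V) : ℕ∞ :=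
  (Ssup B W).inf (fun s => (igraph G B).edist x s)

section Basics

variable (G : SimpleGraph V) [DecidableRel G.Adj] (B : Finset V)
 (μ : V → ℝ) (g : V → V → ℝ) (q : V → ℝ) (W : V → ℝ)

lemma igraph_le_reduced : igraph G B ≤ reduced G B := by
  intro a b h; exact ⟨h.1, Or.inl h.2.1⟩

lemma mem_NintF {z p : V} : p ∈ NintF G B z ↔ G.Adj p z ∧ p ∉ B := by
  simp [NintF]

lemma sum_g_pos (hgpos : ∀ a b, G.Adj a b → 0 < g a b)
    (hBint : ∀ z ∈ B, ∃ p, p ∉ B ∧ G.Adj p z) {z : V} (hz : z ∈ B) :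
    0 < ∑ p ∈ NintF G B z, g p z := by
  obtain ⟨p, hp1, hp2⟩ := hBint z hz
  refine Finset.sum_pos (fun i hi => hgpos _ _ ((mem_NintF G B).1 hi).1) ⟨p, ?_⟩
  exact (mem_NintF G B).2 ⟨hp2, hp1⟩

lemma bfill_not_mem {x : V} (hx : x ∉ B) (v : V → ℝ) : bfill G B g v x = v x := by
  simp [bfill, hx]

lemma bfill_mem {x : V} (hx : x ∈ B) (v : V → ℝ) :
    bfill G B g v x = (∑ p ∈ NintF G B x, g p x * v p) / (∑ p ∈ NintF G B x, g p x) := by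
  simp [bfill, hx]

lemma wv_zero (x : V) : wv G B μ g q W 0 x = W x := rfl

lemma wv_one_int {x : V} (hx : x ∉ B) : wv G B μ g q W 1 x = W x := by
  show bfill G B g W x = W x
  exact bfill_not_mem G B g hx W

lemma wv_rec {x : V} (hx : x ∉ B) (t : ℕ) :
    wv G B μ g q W (t+2) x = 2 * wv G B μ g q W (t+1) x - wv G B μ g q W t x
      + lap G μ g (wv G B μ g q W (t+1)) x - q x * wv G B μ g q W (t+1) x := by
  show bfill G B g _ x = _
  rw [bfill_not_mem G B g hx]

lemma wv_bdry {z : V} (hz : z ∈ B) (t : ℕ) (ht : 1 ≤ t) :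
    wv G B μ g q W t z
      = (∑ p ∈ NintF G B z, g p z * wv G B μ g q W t p) / (∑ p ∈ NintF G B z, g p z) := by
  match t, ht with
  | 1, _ =>
    show bfill G B g W z = _
    rw [bfill_mem G B g hz]
    congr 1
    refine Finset.sum_congr rfl (fun p hp => ?_)
    rw [wv_one_int G B μ g q W ((mem_NintF G B).1 hp).2]
  | (t+2), _ =>
    show bfill G B g _ z = _
    rw [bfill_mem G B g hz]
    congr 1
    refine Finset.sum_congr rfl (fun p hp => ?_)
    rw [wv_rec G B μ g q W ((mem_NintF G B).1 hp).2]

lemma nder_bfill (hgpos : ∀ a b, G.Adj a b → 0 < g a b)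
    (hBint : ∀ z ∈ B, ∃ p, p ∉ B ∧ G.Adj p z)
    {z : V} (hz : z ∈ B) (v : V → ℝ) :
    nder G B μ g (bfill G B g v) z = 0 := by
  have hS : (∑ p ∈ NintF G B z, g p z) ≠ 0 := (sum_g_pos G B g hgpos hBint hz).ne'
  unfold nder
  have : (univ.filter (fun x => G.Adj x z ∧ x ∉ B)) = NintF G B z := rfl
  rw [this]
  have h1 : ∀ p ∈ NintF G B z, g p z * (bfill G B g v p - bfill G B g v z)
      = g p z * v p - g p z * ((∑ p ∈ NintF G B z, g p z * v p) / (∑ p ∈ NintF G B z, g p z)) := by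
    intro p hp
    rw [bfill_not_mem G B g ((mem_NintF G B).1 hp).2, bfill_mem G B g hz]
    ring
  rw [Finset.sum_congr rfl h1, Finset.sum_sub_distrib, ← Finset.sum_mul]
  field_simp
  simp

lemma isWave_wv (hgpos : ∀ a b, G.Adj a b → 0 < g a b)
    (hBint : ∀ z ∈ B, ∃ p, p ∉ B ∧ G.Adj p z)
    (hWn : ∀ z ∈ B, nder G B μ g W z = 0) :
    IsWave G B μ g q W (fun x t => wv G B μ g q W t x) := by
  refine ⟨?_, ?_, ?_, ?_⟩
  · intro x hx t ht
    match t, ht with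
    | (t+1), _ =>
      simp only [Nat.add_sub_cancel]
      rw [wv_rec G B μ g q W hx t]
      ring
  · intro z hz t
    match t with
    | 0 => exact hWn z hz
    | 1 => exact nder_bfill G B μ g hgpos hBint hz W
    | (t+2) => exact nder_bfill G B μ g hgpos hBint hz _
  · intro x hx; exact wv_one_int G B μ g q W hx
  · intro x; rfl

end Basics

section Dist

variable (G : SimpleGraph V) [DecidableRel G.Adj] (B : Finset V)
 (μ : V → ℝ) (g : V → V → ℝ) (q : V → ℝ) (W : V → ℝ)

lemma enat_step {b : ℕ∞} {n : ℕ} (h : ((n : ℕ∞) + 1 ≤ b + 1)) : (n : ℕ∞) ≤ b := by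
  induction b using ENat.recTopCoe with
  | top => exact le_top
  | coe m =>
    have : ((n + 1 : ℕ) : ℕ∞) ≤ ((m + 1 : ℕ) : ℕ∞) := by push_cast; exact h
    have := Nat.cast_le.mp this
    exact Nat.cast_le.mpr (by omega)

lemma mem_Ssup {s : V} : s ∈ Ssup B W ↔ s ∉ B ∧ W s ≠ 0 := by
  classical
  simp [Ssup]

lemma Dd_le {x s : V} (hs : s ∈ Ssup B W) : Dd G B W x ≤ (igraph G B).edist x s :=
  Finset.inf_le hs

lemma Dd_zero_of_mem {x : V} (hx : x ∈ Ssup B W) : Dd G B W x = 0 := by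
  refine le_antisymm ?_ zero_le
  have := Dd_le G B W hx (x := x)
  rwa [SimpleGraph.edist_self] at this

lemma W_eq_zero {x : V} (hx : x ∉ B) (hDx : Dd G B W x ≠ 0) : W x = 0 := by
  by_contra h
  exact hDx (Dd_zero_of_mem G B W ((mem_Ssup B W).2 ⟨hx, h⟩))

lemma Dd_exists {x : V} (hne : (Ssup B W).Nonempty) :
    ∃ s ∈ Ssup B W, Dd G B W x = (igraph G B).edist x s := by
  obtain ⟨s, hs, h⟩ := Finset.exists_mem_eq_inf (Ssup B W) hne
    (fun s => (igraph G B).edist x s)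
  exact ⟨s, hs, h⟩

lemma Dd_triangle (hne : (Ssup B W).Nonempty) {x y : V} (h : (igraph G B).Adj x y) :
    Dd G B W x ≤ Dd G B W y + 1 := by
  obtain ⟨s, hs, hDy⟩ := Dd_exists G B W (x := y) hne
  calc Dd G B W x ≤ (igraph G B).edist x s := Dd_le G B W hs
    _ ≤ (igraph G B).edist x y + (igraph G B).edist y s := SimpleGraph.edist_triangle
    _ = 1 + (igraph G B).edist y s := by rw [(SimpleGraph.edist_eq_one_iff_adj).2 h]
    _ = Dd G B W y + 1 := by rw [hDy, add_comm]

lemma Dd_nbr (hne : (Ssup B W).Nonempty) {x y : V} (h : (igraph G B).Adj x y)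
    {n : ℕ} (hx : ((n : ℕ∞) + 1 ≤ Dd G B W x)) : (n : ℕ∞) ≤ Dd G B W y := by
  exact enat_step (le_trans hx (Dd_triangle G B W hne h))

/-- Finite speed of propagation. -/
lemma vanish (hgsymm : ∀ a b, g a b = g b a)
    (hadj : ∀ z ∈ B, ∀ a b : V, a ∉ B → b ∉ B → G.Adj a z → G.Adj b z → a ≠ b → G.Adj a b)
    (hne : (Ssup B W).Nonempty) :
    ∀ t : ℕ, 1 ≤ t → ∀ x, x ∉ B → (t : ℕ∞) ≤ Dd G B W x → wv G B μ g q W t x = 0 := by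
  intro t
  induction t using Nat.strong_induction_on with
  | _ t IH =>
  intro ht x hx hDx
  match t, ht with
  | 1, _ =>
    rw [wv_one_int G B μ g q W hx]
    refine W_eq_zero G B W hx (fun h0 => ?_)
    rw [h0] at hDx; exact absurd (le_antisymm hDx zero_le) (by simp)
  | (t+2), _ =>
    -- interior values at previous times vanish
    have hIH : ∀ m : ℕ, m < t + 2 → 1 ≤ m → ∀ y, y ∉ B → ((m : ℕ∞) ≤ Dd G B W y) →
        wv G B μ g q W m y = 0 := fun m hm => IH m hm
    have hcast : ∀ (a b : ℕ), a ≤ b → ((a : ℕ∞) ≤ (b:ℕ∞)) := fun a b h => Nat.cast_le.2 h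
    have hxt1 : wv G B μ g q W (t+1) x = 0 :=
      hIH (t+1) (by omega) (by omega) x hx (le_trans (hcast _ _ (by omega)) hDx)
    have hxt : wv G B μ g q W t x = 0 := by
      match t with
      | 0 =>
        rw [wv_zero]
        refine W_eq_zero G B W hx (fun h0 => ?_)
        rw [h0] at hDx
        exact absurd (le_antisymm (le_trans (hcast 1 2 (by omega)) hDx) zero_le) (by simp)
      | (m+1) =>
        exact hIH (m+1) (by omega) (by omega) x hx (le_trans (hcast _ _ (by omega)) hDx)
    -- neighbors vanish at time t+1
    have hDx' : ((t+1 : ℕ) : ℕ∞) + 1 ≤ Dd G B W x := by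
      refine le_trans ?_ hDx; push_cast; rw [add_assoc]; norm_num
    have hnbr : ∀ p, p ∉ B → G.Adj x p → wv G B μ g q W (t+1) p = 0 := by
      intro p hp hadjxp
      refine hIH (t+1) (by omega) (by omega) p hp ?_
      exact Dd_nbr G B W hne ⟨hadjxp, hx, hp⟩ hDx'
    have hlap : ∀ y, G.Adj x y → wv G B μ g q W (t+1) y = 0 := by
      intro y hy
      by_cases hyB : y ∈ B
      · rw [wv_bdry G B μ g q W hyB (t+1) (by omega)]
        have : ∀ p ∈ NintF G B y, g p y * wv G B μ g q W (t+1) p = 0 := by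
          intro p hp
          obtain ⟨hpy, hpB⟩ := (mem_NintF G B).1 hp
          by_cases hpx : p = x
          · rw [hpx, hxt1, mul_zero]
          · rw [hnbr p hpB ((hadj y hyB p x hpB hx hpy hy hpx).symm), mul_zero]
        rw [Finset.sum_eq_zero this, zero_div]
      · exact hnbr y hyB hy
    have hlap0 : lap G μ g (wv G B μ g q W (t+1)) x = 0 := by
      unfold lap
      rw [Finset.sum_eq_zero, mul_zero]
      intro y hy
      rw [Finset.mem_filter] at hy
      rw [hlap y hy.2, hxt1]
      ring
    rw [wv_rec G B μ g q W hx t, hxt1, hxt, hlap0]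
    ring

end Dist

section Arrive

variable (G : SimpleGraph V) [DecidableRel G.Adj] (B : Finset V)
 (μ : V → ℝ) (g : V → V → ℝ) (q : V → ℝ) (W : V → ℝ)

lemma sum_pos_witness {α : Type*} {s : Finset α} {f : α → ℝ} (h : 0 < ∑ i ∈ s, f i) :
    ∃ i ∈ s, 0 < f i := by
  by_contra hno
  push_neg at hno
  exact absurd (Finset.sum_nonpos hno) (not_le.2 h)

lemma first_step {H : SimpleGraph V} {x s : V} {n : ℕ}
    (h : H.edist x s = ((n+1 : ℕ) : ℕ∞)) :
    ∃ y, H.Adj x y ∧ H.edist y s = (n : ℕ∞) := by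
  obtain ⟨w, hw⟩ := H.exists_walk_of_edist_ne_top (by rw [h]; exact ENat.coe_ne_top _)
  have hlen : w.length = n + 1 := by rw [h] at hw; exact_mod_cast hw
  cases w with
  | nil => simp at hlen
  | @cons _ y _ hxy w' =>
    have hlen' : w'.length = n := by simpa using hlen
    refine ⟨y, hxy, le_antisymm ?_ ?_⟩
    · have := SimpleGraph.edist_le w'
      rw [hlen'] at this
      exact this
    · have h1 : H.edist x s ≤ H.edist x y + H.edist y s := SimpleGraph.edist_triangle
      rw [h, SimpleGraph.edist_eq_one_iff_adj.2 hxy] at h1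
      refine enat_step ?_
      calc ((n:ℕ∞) + 1) = ((n+1:ℕ) : ℕ∞) := by push_cast; ring
        _ ≤ 1 + H.edist y s := h1
        _ = H.edist y s + 1 := by rw [add_comm]

/-- Leading coefficients at first arrival time are positive combinations of the
initial value on the nearest support points. -/
lemma arrive (hμ : ∀ v, 0 < μ v)
    (hgpos : ∀ a b, G.Adj a b → 0 < g a b)
    (hgsymm : ∀ a b, g a b = g b a)
    (hadj : ∀ z ∈ B, ∀ a b : V, a ∉ B → b ∉ B → G.Adj a z → G.Adj b z → a ≠ b → G.Adj a b)
    (hne : (Ssup B W).Nonempty) :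
    ∀ n : ℕ, ∀ x, x ∉ B → Dd G B W x = (n : ℕ∞) →
    ∃ c : V → ℝ, (∀ s ∈ Ssup B W, 0 ≤ c s) ∧
      (∀ s ∈ Ssup B W, (0 < c s ↔ (igraph G B).edist x s = (n : ℕ∞))) ∧
      wv G B μ g q W (n+1) x = ∑ s ∈ Ssup B W, c s * W s := by
  intro n
  induction n with
  | zero =>
    intro x hx hDx
    obtain ⟨s, hs, hxs⟩ := Dd_exists G B W (x := x) hne
    rw [hDx] at hxs
    have hsx : x = s := SimpleGraph.edist_eq_zero_iff.1 (by exact hxs.symm)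
    subst hsx
    refine ⟨fun s => if s = x then 1 else 0, fun s _ => by positivity, ?_, ?_⟩
    · intro s hsS
      constructor
      · intro hcs
        have : s = x := by by_contra hne'; simp [hne'] at hcs
        rw [this, SimpleGraph.edist_self]; rfl
      · intro hd
        have : x = s := SimpleGraph.edist_eq_zero_iff.1 (by exact_mod_cast hd)
        simp [← this]
    · rw [wv_one_int G B μ g q W hx, Finset.sum_eq_single x]
      · simp
      · intro b _ hbx; simp [hbx]
      · intro hxne; exact absurd hs hxne
  | succ n IH =>
    intro x hx hDx
    have hcastne : ((n+1 : ℕ) : ℕ∞) ≠ (n : ℕ∞) := by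
      exact_mod_cast fun h => (Nat.succ_ne_self n) (Nat.cast_injective h)
    have hDx' : ((n : ℕ∞) + 1 ≤ Dd G B W x) := by
      rw [hDx]; push_cast; exact le_rfl
    have hDge : ∀ p, p ∉ B → (p = x ∨ G.Adj x p) → (n : ℕ∞) ≤ Dd G B W p := by
      intro p hpB hcase
      rcases hcase with rfl | hadjxp
      · exact le_trans (by exact_mod_cast Nat.le_succ n) (le_of_eq hDx.symm)
      · exact Dd_nbr G B W hne ⟨hadjxp, hx, hpB⟩ hDx'
    -- choice of coefficient vectors from the induction hypothesis
    have Hch : ∀ y : V, ∃ c : V → ℝ, (y ∉ B ∧ Dd G B W y = (n : ℕ∞)) →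
        ((∀ s ∈ Ssup B W, 0 ≤ c s) ∧
         (∀ s ∈ Ssup B W, (0 < c s ↔ (igraph G B).edist y s = (n : ℕ∞))) ∧
         wv G B μ g q W (n+1) y = ∑ s ∈ Ssup B W, c s * W s) := by
      intro y
      by_cases h : y ∉ B ∧ Dd G B W y = (n : ℕ∞)
      · obtain ⟨c, hc⟩ := IH y h.1 h.2
        exact ⟨c, fun _ => hc⟩
      · exact ⟨0, fun hh => absurd hh h⟩
    choose F hF using Hch
    classical
    set cp : V → V → ℝ := fun p s =>
      if p ∉ B ∧ Dd G B W p = (n : ℕ∞) then F p s else 0 with hcp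
    have cp_nonneg : ∀ p, ∀ s ∈ Ssup B W, 0 ≤ cp p s := by
      intro p s hs
      rw [hcp]
      by_cases h : p ∉ B ∧ Dd G B W p = (n : ℕ∞)
      · simp only [h, if_true]; exact (hF p h).1 s hs
      · simp [h]
    have cp_pos_dist : ∀ p, ∀ s ∈ Ssup B W, 0 < cp p s →
        (igraph G B).edist p s = (n : ℕ∞) ∧ Dd G B W p = (n : ℕ∞) ∧ p ∉ B := by
      intro p s hs hpos
      rw [hcp] at hpos
      by_cases h : p ∉ B ∧ Dd G B W p = (n : ℕ∞)
      · simp only [h, if_true] at hpos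
        exact ⟨((hF p h).2.1 s hs).1 hpos, h.2, h.1⟩
      · simp [h] at hpos
    have cp_pos_of : ∀ p, p ∉ B → Dd G B W p = (n : ℕ∞) → ∀ s ∈ Ssup B W,
        (igraph G B).edist p s = (n : ℕ∞) → 0 < cp p s := by
      intro p hpB hDp s hs hd
      have h : p ∉ B ∧ Dd G B W p = (n : ℕ∞) := ⟨hpB, hDp⟩
      rw [hcp]; simp only [h, if_true]
      exact ((hF p h).2.1 s hs).2 hd
    have cp_expand : ∀ p, p ∉ B → (n : ℕ∞) ≤ Dd G B W p →
        wv G B μ g q W (n+1) p = ∑ s ∈ Ssup B W, cp p s * W s := by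
      intro p hpB hDp
      by_cases h : Dd G B W p = (n : ℕ∞)
      · rw [(hF p ⟨hpB, h⟩).2.2]
        refine Finset.sum_congr rfl (fun s hs => ?_)
        rw [hcp]; simp [hpB, h]
      · have hlt : (n : ℕ∞) < Dd G B W p := lt_of_le_of_ne hDp (fun hh => h hh.symm)
        have hle : ((n+1 : ℕ) : ℕ∞) ≤ Dd G B W p := by
          push_cast
          exact (ENat.add_one_le_iff (ENat.coe_ne_top n)).2 hlt
        rw [vanish G B μ g q W hgsymm hadj hne (n+1) (by omega) p hpB hle]
        symm
        refine Finset.sum_eq_zero (fun s hs => ?_)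
        rw [hcp]; simp [h]
    -- coefficient vectors for neighbors of x (boundary ones get averaged)
    set cy : V → V → ℝ := fun y s =>
      if y ∈ B then (∑ p ∈ NintF G B y, g p y * cp p s) / (∑ p ∈ NintF G B y, g p y)
      else cp y s with hcydef
    have hNint_prop : ∀ y, y ∈ B → G.Adj x y → ∀ p ∈ NintF G B y, p = x ∨ G.Adj x p := by
      intro y hyB hxy p hp
      obtain ⟨hpy, hpB⟩ := (mem_NintF G B).1 hp
      by_cases hpx : p = x
      · exact Or.inl hpx
      · exact Or.inr (hadj y hyB p x hpB hx hpy hxy hpx).symm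
    have cy_expand : ∀ y, G.Adj x y →
        wv G B μ g q W (n+1) y = ∑ s ∈ Ssup B W, cy y s * W s := by
      intro y hxy
      by_cases hyB : y ∈ B
      · rw [wv_bdry G B μ g q W hyB (n+1) (by omega)]
        have h1 : ∀ p ∈ NintF G B y, g p y * wv G B μ g q W (n+1) p
            = ∑ s ∈ Ssup B W, g p y * cp p s * W s := by
          intro p hp
          obtain ⟨hpy, hpB⟩ := (mem_NintF G B).1 hp
          rw [cp_expand p hpB (hDge p hpB (hNint_prop y hyB hxy p hp)), Finset.mul_sum]
          exact Finset.sum_congr rfl (fun s _ => by ring)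
        rw [Finset.sum_congr rfl h1, Finset.sum_comm]
        rw [Finset.sum_div]
        refine Finset.sum_congr rfl (fun s hs => ?_)
        rw [hcydef]; simp only [hyB, if_true]
        rw [← Finset.sum_mul, Finset.sum_div]
        rw [← Finset.sum_div]; ring
      · rw [hcydef]; simp only [hyB, if_false]
        exact cp_expand y hyB (hDge y hyB (Or.inr hxy))
    have cy_nonneg : ∀ y, G.Adj x y → ∀ s ∈ Ssup B W, 0 ≤ cy y s := by
      intro y hxy s hs
      rw [hcydef]
      by_cases hyB : y ∈ B
      · simp only [hyB, if_true]
        refine div_nonneg (Finset.sum_nonneg (fun p hp => ?_)) (Finset.sum_nonneg (fun p hp => ?_))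
        · exact mul_nonneg (le_of_lt (hgpos _ _ ((mem_NintF G B).1 hp).1)) (cp_nonneg p s hs)
        · exact le_of_lt (hgpos _ _ ((mem_NintF G B).1 hp).1)
      · simp only [hyB, if_false]
        exact cp_nonneg y s hs
    have hdist_goal : ∀ y, (igraph G B).Adj x y → ∀ s ∈ Ssup B W,
        (igraph G B).edist y s = (n : ℕ∞) → (igraph G B).edist x s = ((n+1:ℕ) : ℕ∞) := by
      intro y hxy s hsS hys
      refine le_antisymm ?_ ?_
      · calc (igraph G B).edist x s ≤ (igraph G B).edist x y + (igraph G B).edist y s :=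
            SimpleGraph.edist_triangle
          _ = 1 + (n : ℕ∞) := by rw [SimpleGraph.edist_eq_one_iff_adj.2 hxy, hys]
          _ = ((n+1:ℕ) : ℕ∞) := by push_cast; rw [add_comm]
      · exact hDx ▸ Dd_le G B W hsS
    have cy_pos_dist : ∀ y, G.Adj x y → ∀ s ∈ Ssup B W, 0 < cy y s →
        (igraph G B).edist x s = ((n+1:ℕ) : ℕ∞) := by
      intro y hxy s hs hpos
      rw [hcydef] at hpos
      by_cases hyB : y ∈ B
      · simp only [hyB, if_true] at hpos
        have hSy : 0 < ∑ p ∈ NintF G B y, g p y := by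
          refine Finset.sum_pos (fun p hp => hgpos _ _ ((mem_NintF G B).1 hp).1) ⟨x, ?_⟩
          exact (mem_NintF G B).2 ⟨hxy, hx⟩
        have hnum : 0 < ∑ p ∈ NintF G B y, g p y * cp p s := by
          by_contra hle
          push_neg at hle
          exact absurd (div_nonpos_of_nonpos_of_nonneg hle hSy.le) (not_le.2 hpos)
        obtain ⟨p, hp, hppos⟩ := sum_pos_witness hnum
        obtain ⟨hpy, hpB⟩ := (mem_NintF G B).1 hp
        have hcpp : 0 < cp p s := by
          by_contra hc
          push_neg at hc
          exact absurd (mul_nonpos_of_nonneg_of_nonpos (hgpos p y hpy).le hc) (not_le.2 hppos)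
        obtain ⟨hdist, hDp, hpB'⟩ := cp_pos_dist p s hs hcpp
        have hpx : p ≠ x := by rintro rfl; rw [hDx] at hDp; exact hcastne hDp
        have hadjxp : G.Adj x p := (hadj y hyB p x hpB hx hpy hxy hpx).symm
        exact hdist_goal p ⟨hadjxp, hx, hpB⟩ s hs hdist
      · simp only [hyB, if_false] at hpos
        obtain ⟨hdist, hDy, _⟩ := cp_pos_dist y s hs hpos
        exact hdist_goal y ⟨hxy, hx, hyB⟩ s hs hdist
    have cy_pos_of : ∀ s ∈ Ssup B W, (igraph G B).edist x s = ((n+1:ℕ) : ℕ∞) →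
        ∃ y, G.Adj x y ∧ 0 < cy y s := by
      intro s hs hd
      obtain ⟨y, hxy, hys⟩ := first_step hd
      have hyB : y ∉ B := hxy.2.2
      have hDyle : Dd G B W y ≤ (n : ℕ∞) := le_trans (Dd_le G B W hs) (le_of_eq hys)
      have hDyge : (n:ℕ∞) ≤ Dd G B W y := hDge y hyB (Or.inr hxy.1)
      refine ⟨y, hxy.1, ?_⟩
      rw [hcydef]; simp only [hyB, if_false]
      exact cp_pos_of y hyB (le_antisymm hDyle hDyge) s hs hys
    -- vanishing of x itself at times n, n+1
    have hu1 : wv G B μ g q W (n+1) x = 0 :=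
      vanish G B μ g q W hgsymm hadj hne (n+1) (by omega) x hx hDx.ge
    have hu0 : wv G B μ g q W n x = 0 := by
      match n with
      | 0 =>
        rw [wv_zero]
        refine W_eq_zero G B W hx (fun h0 => ?_)
        rw [h0] at hDx; simp at hDx
      | (m+1) =>
        exact vanish G B μ g q W hgsymm hadj hne (m+1) (by omega) x hx
          (le_trans (Nat.cast_le.mpr (by omega)) hDx.ge)
    refine ⟨fun s => (μ x)⁻¹ * ∑ y ∈ univ.filter (fun y => G.Adj x y), g x y * cy y s,
      ?_, ?_, ?_⟩
    · intro s hs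
      refine mul_nonneg (inv_nonneg.2 (hμ x).le) (Finset.sum_nonneg (fun y hy => ?_))
      rw [Finset.mem_filter] at hy
      exact mul_nonneg (hgpos x y hy.2).le (cy_nonneg y hy.2 s hs)
    · intro s hs
      constructor
      · intro hpos
        have hsum : 0 < ∑ y ∈ univ.filter (fun y => G.Adj x y), g x y * cy y s := by
          by_contra hle; push_neg at hle
          exact absurd (mul_nonpos_of_nonneg_of_nonpos (inv_nonneg.2 (hμ x).le) hle)
            (not_le.2 hpos)
        obtain ⟨y, hy, hypos⟩ := sum_pos_witness hsum
        rw [Finset.mem_filter] at hy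
        have hcyp : 0 < cy y s := by
          by_contra hc; push_neg at hc
          exact absurd (mul_nonpos_of_nonneg_of_nonpos (hgpos x y hy.2).le hc) (not_le.2 hypos)
        exact cy_pos_dist y hy.2 s hs hcyp
      · intro hd
        obtain ⟨y, hxy, hcyp⟩ := cy_pos_of s hs hd
        refine mul_pos (inv_pos.2 (hμ x)) (Finset.sum_pos' ?_ ⟨y, ?_, ?_⟩)
        · intro i hi; rw [Finset.mem_filter] at hi
          exact mul_nonneg (hgpos x i hi.2).le (cy_nonneg i hi.2 s hs)
        · exact Finset.mem_filter.2 ⟨Finset.mem_univ y, hxy⟩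
        · exact mul_pos (hgpos x y hxy) hcyp
    · have hterm : ∀ y ∈ univ.filter (fun y => G.Adj x y),
          g x y * (wv G B μ g q W (n+1) y - wv G B μ g q W (n+1) x)
          = ∑ s ∈ Ssup B W, g x y * cy y s * W s := by
        intro y hy; rw [Finset.mem_filter] at hy
        rw [hu1, sub_zero, cy_expand y hy.2, Finset.mul_sum]
        exact Finset.sum_congr rfl (fun s _ => by ring)
      have hlap : lap G μ g (wv G B μ g q W (n+1)) x
          = ∑ s ∈ Ssup B W,
            ((μ x)⁻¹ * ∑ y ∈ univ.filter (fun y => G.Adj x y), g x y * cy y s) * W s := by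
        unfold lap
        rw [Finset.sum_congr rfl hterm, Finset.sum_comm, Finset.mul_sum]
        refine Finset.sum_congr rfl (fun s hs => ?_)
        rw [← Finset.sum_mul]
        ring
      rw [wv_rec G B μ g q W hx n, hu1, hu0, hlap]
      ring_nf

end Arrive

section Walks

variable (G : SimpleGraph V) [DecidableRel G.Adj] (B : Finset V)

lemma edist_ne_top_of_reachable {H : SimpleGraph V} {a b : V} (h : H.Reachable a b) :
    H.edist a b ≠ ⊤ := by
  obtain ⟨w, hw⟩ := h.exists_walk_length_eq_edist
  rw [← hw]
  exact ENat.coe_ne_top _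

lemma red_walk_le
    (hadj : ∀ z ∈ B, ∀ a b : V, a ∉ B → b ∉ B → G.Adj a z → G.Adj b z → a ≠ b → G.Adj a b)
    {b : V} (hb : b ∉ B) :
    ∀ l : ℕ, ∀ a, a ∉ B → ∀ w : (reduced G B).Walk a b, w.length = l →
      (igraph G B).edist a b ≤ (l : ℕ∞) := by
  intro l
  induction l using Nat.strong_induction_on with
  | _ l IHl =>
  intro a ha w hw
  cases w with
  | nil => simp [SimpleGraph.edist_self]
  | @cons _ c _ hac w' =>
    by_cases hcB : c ∈ B
    · cases w' with
      | nil => exact absurd hcB hb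
      | @cons _ d _ hcd w'' =>
        have hdB : d ∉ B := hcd.2.resolve_left (not_not_intro hcB)
        have hlen : w''.length + 2 = l := by
          simpa [SimpleGraph.Walk.length_cons] using hw
        by_cases had : a = d
        · subst had
          have := IHl w''.length (by omega) a ha w'' rfl
          exact le_trans this (Nat.cast_le.mpr (by omega))
        · have hGad : G.Adj a d := hadj c hcB a d ha hdB hac.1 hcd.1.symm had
          have hIH := IHl w''.length (by omega) d hdB w'' rfl
          calc (igraph G B).edist a b
              ≤ (igraph G B).edist a d + (igraph G B).edist d b :=
                SimpleGraph.edist_triangle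
            _ ≤ 1 + (w''.length : ℕ∞) :=
                add_le_add (le_of_eq (SimpleGraph.edist_eq_one_iff_adj.2 ⟨hGad, ha, hdB⟩)) hIH
            _ ≤ ((w''.length + 2 : ℕ) : ℕ∞) := by
                push_cast
                have : ((1:ℕ∞)) + (w''.length : ℕ∞) ≤ (w''.length : ℕ∞) + 2 := by
                  rw [add_comm]
                  exact add_le_add le_rfl (by norm_num)
                exact this
            _ = (l : ℕ∞) := by rw [hlen]
    · have hlen : w'.length + 1 = l := by simpa using hw
      have hIH := IHl w'.length (by omega) c hcB w' rfl
      calc (igraph G B).edist a b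
          ≤ (igraph G B).edist a c + (igraph G B).edist c b := SimpleGraph.edist_triangle
        _ ≤ 1 + (w'.length : ℕ∞) :=
            add_le_add (le_of_eq (SimpleGraph.edist_eq_one_iff_adj.2 ⟨hac.1, ha, hcB⟩)) hIH
        _ = (l : ℕ∞) := by rw [← hlen]; push_cast; rw [add_comm]

lemma reach_bdry :
    ∀ {a c : V}, ∀ _ : G.Walk a c, c ∈ B → a ∉ B → ∃ z' ∈ B, (reduced G B).Reachable z' a := by
  intro a c w
  induction w with
  | nil => intro hc ha; exact absurd hc ha
  | @cons u d _ hud w' ih =>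
    intro hc hu
    by_cases hdB : d ∈ B
    · exact ⟨d, hdB, SimpleGraph.Adj.reachable ⟨hud.symm, Or.inr hu⟩⟩
    · obtain ⟨z', hz', hr⟩ := ih hc hdB
      exact ⟨z', hz', hr.trans (SimpleGraph.Adj.reachable ⟨hud.symm, Or.inl hdB⟩)⟩

end Walks

/-- Positivity at extreme points: if the wave generated by a Neumann initial value `W`
first arrives at every boundary vertex with a positive value, then `W` is positive at
every extreme point of its interior support. -/
theorem positivity_at_extreme (G : SimpleGraph V) [DecidableRel G.Adj] (B : Finset V)
    (μ : V → ℝ) (g : V → V → ℝ) (q : V → ℝ)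
    (hμ : ∀ v, 0 < μ v)
    (hgpos : ∀ a b, G.Adj a b → 0 < g a b)
    (hgsymm : ∀ a b, g a b = g b a)
    (hconn : G.Connected)
    (hadj : ∀ z ∈ B, ∀ a b : V, a ∉ B → b ∉ B → G.Adj a z → G.Adj b z → a ≠ b → G.Adj a b)
    (hBint : ∀ z ∈ B, ∃ p, p ∉ B ∧ G.Adj p z)
    (W : V → ℝ)
    (hWn : ∀ z ∈ B, nder G B μ g W z = 0)
    (hpos : ∀ u : V → ℕ → ℝ, IsWave G B μ g q W u → ∀ z ∈ B, ∀ T : ℕ,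
      IsLeast {t : ℕ | 1 ≤ t ∧ u z t ≠ 0} T → 0 < u z T)
    (x₀ : V) (hx₀ : x₀ ∉ B) (hx₀supp : W x₀ ≠ 0)
    (hext : ∃ z ∈ B, ∀ y, y ∉ B → W y ≠ 0 → y ≠ x₀ →
      (reduced G B).edist z x₀ < (reduced G B).edist z y) :
    0 < W x₀ := by
  classical
  by_contra hnonpos
  push_neg at hnonpos
  have hWneg : W x₀ < 0 := lt_of_le_of_ne hnonpos hx₀supp
  have hx₀S : x₀ ∈ Ssup B W := (mem_Ssup B W).2 ⟨hx₀, hx₀supp⟩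
  have hne : (Ssup B W).Nonempty := ⟨x₀, hx₀S⟩
  obtain ⟨z, hzB, hzext⟩ := hext
  have hz₁ : ∃ z₁ ∈ B, (reduced G B).edist z₁ x₀ ≠ ⊤ ∧
      ∀ y ∈ Ssup B W, y ≠ x₀ → (reduced G B).edist z₁ x₀ < (reduced G B).edist z₁ y := by
    by_cases hfin : (reduced G B).edist z x₀ = ⊤
    · have hSx : ∀ y ∈ Ssup B W, y = x₀ := by
        intro y hy
        by_contra hyne
        obtain ⟨hyB, hyW⟩ := (mem_Ssup B W).1 hy
        have := hzext y hyB hyW hyne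
        rw [hfin] at this
        exact absurd this not_top_lt
      obtain ⟨w⟩ := hconn x₀ z
      obtain ⟨z₁, hz₁B, hr⟩ := reach_bdry G B w hzB hx₀
      refine ⟨z₁, hz₁B, edist_ne_top_of_reachable hr, fun y hy hyne => ?_⟩
      exact absurd (hSx y hy) hyne
    · exact ⟨z, hzB, hfin, fun y hy hyne =>
        hzext y ((mem_Ssup B W).1 hy).1 ((mem_Ssup B W).1 hy).2 hyne⟩
  obtain ⟨z₁, hz₁B, hfin, hextr⟩ := hz₁
  have hz₁x₀ : z₁ ≠ x₀ := fun h => hx₀ (h ▸ hz₁B)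
  set Nz := NintF G B z₁ with hNz
  have hNzne : Nz.Nonempty := by
    obtain ⟨p, hp1, hp2⟩ := hBint z₁ hz₁B
    exact ⟨p, (mem_NintF G B).2 ⟨hp2, hp1⟩⟩
  set E := Nz.inf (fun p => Dd G B W p) with hE
  have hred : ∀ m : ℕ, (reduced G B).edist z₁ x₀ = (m : ℕ∞) →
      ∃ p₀ ∈ Nz, Dd G B W p₀ ≤ ((m - 1 : ℕ) : ℕ∞) := by
    intro m hm
    obtain ⟨w, hw⟩ := (reduced G B).exists_walk_of_edist_ne_top
      (by rw [hm]; exact ENat.coe_ne_top _)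
    have hlen : w.length = m := by rw [hm] at hw; exact_mod_cast hw
    cases w with
    | nil => exact absurd rfl hz₁x₀
    | @cons _ p₀ _ hzp w' =>
      have hp₀B : p₀ ∉ B := hzp.2.resolve_left (not_not_intro hz₁B)
      have hp₀Nz : p₀ ∈ Nz := (mem_NintF G B).2 ⟨hzp.1.symm, hp₀B⟩
      have hlen' : w'.length = m - 1 := by
        simp [SimpleGraph.Walk.length_cons] at hlen; omega
      have hint := red_walk_le G B hadj hx₀ w'.length p₀ hp₀B w' rfl
      exact ⟨p₀, hp₀Nz, le_trans (le_trans (Dd_le G B W hx₀S) hint)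
        (Nat.cast_le.mpr (by omega))⟩
  obtain ⟨m₀, hm₀⟩ := WithTop.ne_top_iff_exists.1 hfin
  obtain ⟨p₀', hp₀'Nz, hp₀'le⟩ := hred m₀ hm₀.symm
  have hm₀pos : 1 ≤ m₀ := by
    rcases Nat.eq_zero_or_pos m₀ with h0 | h
    · have h00 : (reduced G B).edist z₁ x₀ = 0 := by rw [← hm₀, h0]; rfl
      exact absurd (SimpleGraph.edist_eq_zero_iff.1 h00) hz₁x₀
    · exact h
  have hEfin : E ≠ ⊤ := by
    intro htop
    have h1 : E ≤ Dd G B W p₀' := Finset.inf_le hp₀'Nz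
    rw [htop, top_le_iff] at h1
    rw [h1] at hp₀'le
    exact (ENat.coe_ne_top _) (top_le_iff.1 (le_trans le_top hp₀'le))
  obtain ⟨e, he⟩ := WithTop.ne_top_iff_exists.1 hEfin
  have hEle : ∀ p ∈ Nz, (e : ℕ∞) ≤ Dd G B W p := by
    intro p hp
    have h1 : E ≤ Dd G B W p := Finset.inf_le hp
    exact le_trans (le_of_eq he) h1
  obtain ⟨p₁, hp₁Nz, hp₁E⟩ := Finset.exists_mem_eq_inf Nz hNzne (fun p => Dd G B W p)
  have hDp₁ : Dd G B W p₁ = (e : ℕ∞) := by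
    have h2 : E = Dd G B W p₁ := hp₁E
    rw [← h2, ← he]; rfl
  have hkey : ∀ p ∈ Nz, ∀ s ∈ Ssup B W, (igraph G B).edist p s = (e : ℕ∞) → s = x₀ := by
    intro p hp s hs hd
    by_contra hsne
    obtain ⟨hpz, hpB⟩ := (mem_NintF G B).1 hp
    have h1 : (reduced G B).edist z₁ s ≤ (e : ℕ∞) + 1 := by
      calc (reduced G B).edist z₁ s
          ≤ (reduced G B).edist z₁ p + (reduced G B).edist p s := SimpleGraph.edist_triangle
        _ ≤ 1 + (e : ℕ∞) := add_le_add
            (le_of_eq (SimpleGraph.edist_eq_one_iff_adj.2 ⟨hpz.symm, Or.inr hpB⟩))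
            (le_trans (SimpleGraph.edist_anti (igraph_le_reduced G B)) (le_of_eq hd))
        _ = (e : ℕ∞) + 1 := by rw [add_comm]
    have h2 : (reduced G B).edist z₁ x₀ < (e : ℕ∞) + 1 :=
      lt_of_lt_of_le (hextr s hs hsne) h1
    have hm₀le : m₀ ≤ e := by
      rw [← hm₀] at h2
      have h3 : (m₀ : ℕ∞) < ((e + 1 : ℕ) : ℕ∞) := by push_cast; exact h2
      have := Nat.cast_lt.1 h3
      omega
    have h4 : (e : ℕ∞) ≤ ((m₀ - 1 : ℕ) : ℕ∞) := le_trans (hEle p₀' hp₀'Nz) hp₀'le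
    have := Nat.cast_le.1 h4
    omega
  have hval : ∀ p ∈ Nz, Dd G B W p = (e : ℕ∞) → ∃ c₀ : ℝ, 0 ≤ c₀ ∧
      wv G B μ g q W (e+1) p = c₀ * W x₀ ∧
      ((igraph G B).edist p x₀ = (e : ℕ∞) → 0 < c₀) := by
    intro p hp hDp
    obtain ⟨c, hc1, hc2, hc3⟩ := arrive G B μ g q W hμ hgpos hgsymm hadj hne e p
      ((mem_NintF G B).1 hp).2 hDp
    refine ⟨c x₀, hc1 x₀ hx₀S, ?_, fun hd => (hc2 x₀ hx₀S).2 hd⟩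
    rw [hc3, Finset.sum_eq_single x₀]
    · intro s hs hsne
      have hnp : ¬ 0 < c s := fun hcs => hsne (hkey p hp s hs ((hc2 s hs).1 hcs))
      rw [le_antisymm (not_lt.1 hnp) (hc1 s hs), zero_mul]
    · intro h; exact absurd hx₀S h
  have hterm : ∀ p ∈ Nz, g p z₁ * wv G B μ g q W (e+1) p ≤ 0 := by
    intro p hp
    obtain ⟨hpz, hpB⟩ := (mem_NintF G B).1 hp
    by_cases hDp : Dd G B W p = (e : ℕ∞)
    · obtain ⟨c₀, h0, heq, _⟩ := hval p hp hDp
      rw [heq]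
      exact mul_nonpos_of_nonneg_of_nonpos (hgpos p z₁ hpz).le
        (mul_nonpos_of_nonneg_of_nonpos h0 hWneg.le)
    · have hge : ((e + 1 : ℕ) : ℕ∞) ≤ Dd G B W p := by
        push_cast
        exact (ENat.add_one_le_iff (ENat.coe_ne_top e)).2
          (lt_of_le_of_ne (hEle p hp) (Ne.symm hDp))
      rw [vanish G B μ g q W hgsymm hadj hne (e+1) (by omega) p hpB hge, mul_zero]
  have hedist₁ : (igraph G B).edist p₁ x₀ = (e : ℕ∞) := by
    obtain ⟨s₁, hs₁, hs₁d⟩ := Dd_exists G B W (x := p₁) hne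
    rw [hDp₁] at hs₁d
    have := hkey p₁ hp₁Nz s₁ hs₁ hs₁d.symm
    rw [← this]
    exact hs₁d.symm
  have hterm₁ : g p₁ z₁ * wv G B μ g q W (e+1) p₁ < 0 := by
    obtain ⟨c₀, h0, heq, hposc⟩ := hval p₁ hp₁Nz hDp₁
    rw [heq]
    exact mul_neg_of_pos_of_neg (hgpos p₁ z₁ ((mem_NintF G B).1 hp₁Nz).1)
      (mul_neg_of_pos_of_neg (hposc hedist₁) hWneg)
  have hsumneg : ∑ p ∈ Nz, g p z₁ * wv G B μ g q W (e+1) p < 0 := by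
    calc ∑ p ∈ Nz, g p z₁ * wv G B μ g q W (e+1) p
        < ∑ _p ∈ Nz, (0:ℝ) := Finset.sum_lt_sum hterm ⟨p₁, hp₁Nz, hterm₁⟩
      _ = 0 := Finset.sum_const_zero
  have hfinal : wv G B μ g q W (e+1) z₁ < 0 := by
    rw [wv_bdry G B μ g q W hz₁B (e+1) (by omega)]
    exact div_neg_of_neg_of_pos hsumneg (sum_g_pos G B g hgpos hBint hz₁B)
  have hzero : ∀ t : ℕ, 1 ≤ t → t ≤ e → wv G B μ g q W t z₁ = 0 := by
    intro t ht hte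
    rw [wv_bdry G B μ g q W hz₁B t ht, Finset.sum_eq_zero, zero_div]
    intro p hp
    rw [vanish G B μ g q W hgsymm hadj hne t ht p ((mem_NintF G B).1 hp).2
      (le_trans (Nat.cast_le.mpr hte) (hEle p hp)), mul_zero]
  have hleast : IsLeast {t : ℕ | 1 ≤ t ∧ wv G B μ g q W t z₁ ≠ 0} (e+1) := by
    constructor
    · exact ⟨by omega, hfinal.ne⟩
    · rintro t ⟨ht1, htne⟩
      by_contra hlt
      push_neg at hlt
      exact htne (hzero t ht1 (by omega))
  have := hpos (fun x t => wv G B μ g q W t x)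
    (isWave_wv G B μ g q W hgpos hBint hWn) z₁ hz₁B (e+1) hleast
  exact absurd this (not_lt.2 hfinal.le)
end

section
/- Edge detection between interior vertices via waves: let G be a finite weighted graph with boundary such that interior neighbors of a common boundary vertex are adjacent, and let x, y ∈ G. Then x ~ y if and only if the minimum over t ∈ ℕ of times with ⟨u^{W_x}(·,t), W_y⟩_{L²(G)} ≠ 0 equals 2, where W_x, W_y are Neumann initial values supported (in the interior) exactly at x and y respectively with positive value there. -/
open Finset

variable {V : Type*} [Fintype V] [DecidableEq V]

/-- Edge detection between interior vertices via waves: `x ~ y` if and only if the first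
time the wave generated by the single-point initial value `W_x` has nonzero `L²(G)` inner
product with `W_y` is exactly `t = 2`. -/
theorem edge_detection_interior (G : SimpleGraph V) [DecidableRel G.Adj] (B : Finset V)
    (μ : V → ℝ) (g : V → V → ℝ) (q : V → ℝ)
    (hμ : ∀ v, 0 < μ v)
    (hgpos : ∀ a b, G.Adj a b → 0 < g a b)
    (hgsymm : ∀ a b, g a b = g b a)
    (hadj : ∀ z ∈ B, ∀ a b : V, a ∉ B → b ∉ B → G.Adj a z → G.Adj b z → a ≠ b → G.Adj a b)
    (x y : V) (hx : x ∉ B) (hy : y ∉ B)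
    (Wx Wy : V → ℝ)
    (hWxpos : 0 < Wx x) (hWxsupp : ∀ p, p ∉ B → p ≠ x → Wx p = 0)
    (hWxn : ∀ z ∈ B, nder G B μ g Wx z = 0)
    (hWypos : 0 < Wy y) (hWysupp : ∀ p, p ∉ B → p ≠ y → Wy p = 0)
    (hWyn : ∀ z ∈ B, nder G B μ g Wy z = 0)
    (ux : V → ℕ → ℝ) (hux : IsWave G B μ g q Wx ux) :
    G.Adj x y ↔
      sInf {t : ℕ | ∑ p ∈ Bᶜ, μ p * ux p t * Wy p ≠ 0} = 2 := by
  obtain ⟨hwave, hneum, hinit1, hinit0⟩ := hux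
  -- interior values at times 0 and 1
  have hval0 : ∀ p, p ∉ B → ux p 0 = if p = x then Wx x else 0 := by
    intro p hp
    rw [hinit0]
    split
    · next h => rw [h]
    · next h => exact hWxsupp p hp h
  have hval1 : ∀ p, p ∉ B → ux p 1 = if p = x then Wx x else 0 := by
    intro p hp; rw [hinit1 p hp]; exact hval0 p hp
  -- boundary identity from the Neumann condition
  have hbdry : ∀ z ∈ B, ∀ t : ℕ,
      (∑ w ∈ univ.filter (fun w => G.Adj w z ∧ w ∉ B), g w z) * ux z t
        = ∑ w ∈ univ.filter (fun w => G.Adj w z ∧ w ∉ B), g w z * ux w t := by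
    intro z hz t
    have h := hneum z hz t
    simp only [nder] at h
    have hμ' : (μ z)⁻¹ ≠ 0 := inv_ne_zero (hμ z).ne'
    have h0 : ∑ w ∈ univ.filter (fun w => G.Adj w z ∧ w ∉ B),
        g w z * (ux w t - ux z t) = 0 := by
      rcases mul_eq_zero.mp h with h | h
      · exact absurd h hμ'
      · exact h
    have hsplit : ∑ w ∈ univ.filter (fun w => G.Adj w z ∧ w ∉ B),
        g w z * (ux w t - ux z t)
        = (∑ w ∈ univ.filter (fun w => G.Adj w z ∧ w ∉ B), g w z * ux w t)
          - (∑ w ∈ univ.filter (fun w => G.Adj w z ∧ w ∉ B), g w z) * ux z t := by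
      rw [Finset.sum_mul, ← Finset.sum_sub_distrib]
      exact Finset.sum_congr rfl (fun w _ => by ring)
    rw [hsplit] at h0
    linarith
  -- boundary value at time 1
  have hbdry1 : ∀ z ∈ B,
      (∑ w ∈ univ.filter (fun w => G.Adj w z ∧ w ∉ B), g w z) * ux z 1
        = if G.Adj x z then g x z * Wx x else 0 := by
    intro z hz
    rw [hbdry z hz 1]
    have hcong : ∀ w ∈ univ.filter (fun w => G.Adj w z ∧ w ∉ B),
        g w z * ux w 1 = if w = x then g x z * Wx x else 0 := by
      intro w hw
      simp only [Finset.mem_filter] at hw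
      rw [hval1 w hw.2.2]
      split
      · next h => rw [h]
      · ring
    rw [Finset.sum_congr rfl hcong, Finset.sum_ite_eq' _ x (fun _ => g x z * Wx x)]
    simp [hx]
  -- positivity of the boundary weight sum, given an interior neighbor
  have hSpos : ∀ z : V, ∀ p, p ∉ B → G.Adj p z →
      0 < ∑ w ∈ univ.filter (fun w => G.Adj w z ∧ w ∉ B), g w z := by
    intro z p hp hpz
    apply Finset.sum_pos'
    · intro w hw
      simp only [Finset.mem_filter] at hw
      exact (hgpos _ _ hw.2.1).le
    · exact ⟨p, by simp [hpz, hp], hgpos _ _ hpz⟩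
  -- boundary values at time 1 are nonnegative (when z has an interior neighbor)
  have hbnn : ∀ z ∈ B, ∀ p, p ∉ B → G.Adj p z → 0 ≤ ux z 1 := by
    intro z hz p hp hpz
    have hS := hSpos z p hp hpz
    have h := hbdry1 z hz
    have hrhs : 0 ≤ if G.Adj x z then g x z * Wx x else 0 := by
      split
      · next hadj' => exact (mul_pos (hgpos _ _ hadj') hWxpos).le
      · exact le_rfl
    exact (mul_nonneg_iff_of_pos_left hS).mp (by rw [h]; exact hrhs)
  -- the wave equation at time 1 for interior points p ≠ x
  have h2eq : ∀ p, p ∉ B → p ≠ x →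
      μ p * ux p 2 = ∑ w ∈ univ.filter (fun w => G.Adj p w), g p w * ux w 1 := by
    intro p hp hpx
    have hw := hwave p hp 1 le_rfl
    have h1 : ux p 1 = 0 := by rw [hval1 p hp]; simp [hpx]
    have h0 : ux p 0 = 0 := by rw [hval0 p hp]; simp [hpx]
    simp only [lap] at hw
    norm_num [h0, h1] at hw
    have h2 : ux p 2 = (μ p)⁻¹ * ∑ w ∈ univ.filter (fun w => G.Adj p w), g p w * ux w 1 := by
      linarith
    rw [h2, ← mul_assoc, mul_inv_cancel₀ (hμ p).ne', one_mul]
  -- each term is nonnegative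
  have hterm : ∀ p, p ∉ B → ∀ w, G.Adj p w → 0 ≤ g p w * ux w 1 := by
    intro p hp w hw
    by_cases hwB : w ∈ B
    · exact mul_nonneg (hgpos _ _ hw).le (hbnn w hwB p hp hw)
    · rw [hval1 w hwB]
      split
      · exact mul_nonneg (hgpos _ _ hw).le hWxpos.le
      · simp
  -- positivity at time 2 for interior neighbors of x
  have h2pos : ∀ p, p ∉ B → p ≠ x → G.Adj p x → 0 < ux p 2 := by
    intro p hp hpx hpadj
    have hT : 0 < ∑ w ∈ univ.filter (fun w => G.Adj p w), g p w * ux w 1 := by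
      apply Finset.sum_pos'
      · intro w hw
        simp only [Finset.mem_filter] at hw
        exact hterm p hp w hw.2
      · refine ⟨x, by simp [hpadj], ?_⟩
        have : ux x 1 = Wx x := by rw [hval1 x hx]; simp
        rw [this]
        exact mul_pos (hgpos _ _ hpadj) hWxpos
    have heq := h2eq p hp hpx
    exact (mul_pos_iff_of_pos_left (hμ p)).mp (by rw [heq]; exact hT)
  -- vanishing at time 2 for interior non-neighbors of x
  have h2zero : ∀ p, p ∉ B → p ≠ x → ¬ G.Adj p x → ux p 2 = 0 := by
    intro p hp hpx hpadj
    have hT : ∑ w ∈ univ.filter (fun w => G.Adj p w), g p w * ux w 1 = 0 := by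
      apply Finset.sum_eq_zero
      intro w hw
      simp only [Finset.mem_filter] at hw
      by_cases hwB : w ∈ B
      · have hnadjx : ¬ G.Adj x w := by
          intro hxw
          exact hpadj (hadj w hwB x p hx hp hxw hw.2 (fun h => hpx h.symm)).symm
        have hS := hSpos w p hp hw.2
        have h := hbdry1 w hwB
        rw [if_neg hnadjx] at h
        have : ux w 1 = 0 := by
          rcases mul_eq_zero.mp h with h' | h'
          · exact absurd h' hS.ne'
          · exact h'
        rw [this]; ring
      · have hwx : w ≠ x := by
          intro h; rw [h] at hw; exact hpadj hw.2
        rw [hval1 w hwB, if_neg hwx]; ring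
    have := h2eq p hp hpx
    have hμp : μ p ≠ 0 := (hμ p).ne'
    rw [hT] at this
    rcases mul_eq_zero.mp this with h' | h'
    · exact absurd h' hμp
    · exact h'
  -- the inner product reduces to the single term at y
  have hsum : ∀ t, ∑ p ∈ Bᶜ, μ p * ux p t * Wy p = μ y * ux y t * Wy y := by
    intro t
    apply Finset.sum_eq_single_of_mem y (by simpa using hy)
    intro p hp hpy
    rw [hWysupp p (by simpa using hp) hpy, mul_zero]
  have hmem : ∀ t, (∑ p ∈ Bᶜ, μ p * ux p t * Wy p ≠ 0) ↔ ux y t ≠ 0 := by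
    intro t
    rw [hsum t]
    simp [mul_ne_zero_iff, (hμ y).ne', hWypos.ne']
  by_cases hxy : x = y
  · subst hxy
    have h0mem : 0 ∈ {t : ℕ | ∑ p ∈ Bᶜ, μ p * ux p t * Wy p ≠ 0} := by
      rw [Set.mem_setOf_eq, hmem 0, hinit0]
      exact hWxpos.ne'
    constructor
    · intro h; exact absurd h (G.irrefl)
    · intro h
      have := Nat.sInf_le h0mem
      omega
  · have hyx : y ≠ x := fun h => hxy h.symm
    have hy0 : ux y 0 = 0 := by rw [hval0 y hy, if_neg hyx]
    have hy1 : ux y 1 = 0 := by rw [hval1 y hy, if_neg hyx]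
    constructor
    · intro hadjxy
      have h2m : 2 ∈ {t : ℕ | ∑ p ∈ Bᶜ, μ p * ux p t * Wy p ≠ 0} := by
        rw [Set.mem_setOf_eq, hmem 2]
        exact (h2pos y hy hyx hadjxy.symm).ne'
      apply le_antisymm (Nat.sInf_le h2m)
      have hne : {t : ℕ | ∑ p ∈ Bᶜ, μ p * ux p t * Wy p ≠ 0}.Nonempty := ⟨2, h2m⟩
      have hmm := Nat.sInf_mem hne
      by_contra hlt
      push_neg at hlt
      have hcase : sInf {t : ℕ | ∑ p ∈ Bᶜ, μ p * ux p t * Wy p ≠ 0} = 0 ∨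
          sInf {t : ℕ | ∑ p ∈ Bᶜ, μ p * ux p t * Wy p ≠ 0} = 1 := by omega
      rcases hcase with h | h
      · rw [h] at hmm; exact (hmem 0).mp hmm hy0
      · rw [h] at hmm; exact (hmem 1).mp hmm hy1
    · intro hInf
      by_contra hnadj
      have h2z : ux y 2 = 0 := h2zero y hy hyx (fun h => hnadj h.symm)
      have hne : {t : ℕ | ∑ p ∈ Bᶜ, μ p * ux p t * Wy p ≠ 0}.Nonempty := by
        by_contra hemp
        rw [Set.not_nonempty_iff_eq_empty] at hemp
        rw [hemp, Nat.sInf_empty] at hInf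
        exact absurd hInf (by norm_num)
      have hmm := Nat.sInf_mem hne
      rw [hInf, Set.mem_setOf_eq, hmem 2] at hmm
      exact hmm h2z
end
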